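/- arXiv:2409.08896 — 16 statements merged into one kernel-verified Lean document; each statement's English description precedes it below -/
import Mathlib

section
/- Let g and ω be weights, let k ≥ 2 be an integer, let x ∈ X be a fixed point, and let λ be a real number with λ > T^g_{0,k-1}ω(x). Then there exists a finite (possibly empty) family of pairwise disjoint dyadic subintervals I_1, …, I_s of {0,1,…,k-1}, each a proper dyadic subinterval possessing a dyadic parent Ĩ_i, such that: (a) for each i = 1,…,s, λ < T^g_{I_i}ω(x) ≤ C(T,g,I_i,x)·λ, where C(T,g,I_i,x) = (Σ_{j∈I_i} g(T^j x))^{-1} · Σ_{j∈Ĩ_i} g(T^j x); and (b) if 0 ≤ j ≤ k-1 and j ∉ I_1 ∪ ⋯ ∪ I_s, then ω(T^j x) ≤ λ. -/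
open MeasureTheory Finset

/-- Dyadic subintervals `[a, b)` of `{0, 1, …, k-1}`: the full interval `[0, k)` is dyadic,
and every dyadic interval with at least two elements is split into its left child
(its first `⌈#I/2⌉` elements) and its right child (the remaining elements). -/
inductive IsDyadic (k : ℕ) : ℕ → ℕ → Prop
  | top : IsDyadic k 0 k
  | left {a b : ℕ} : IsDyadic k a b → a + 2 ≤ b → IsDyadic k a (a + (b - a + 1) / 2)
  | right {a b : ℕ} : IsDyadic k a b → a + 2 ≤ b → IsDyadic k (a + (b - a + 1) / 2) b

/-- `[a, b)` is a dyadic child of the dyadic interval `[pa, pb)` (its dyadic parent). -/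
def IsDyadicChild (k a b pa pb : ℕ) : Prop :=
  IsDyadic k pa pb ∧ pa + 2 ≤ pb ∧
    ((a = pa ∧ b = pa + (pb - pa + 1) / 2) ∨ (a = pa + (pb - pa + 1) / 2 ∧ b = pb))

section Aux

variable {X : Type*} (T : X → X) (g ω : X → ℝ) (x : X)

def Sg (a b : ℕ) : ℝ := ∑ j ∈ Finset.Ico a b, g (T^[j] x)
def Wg (a b : ℕ) : ℝ := ∑ j ∈ Finset.Ico a b, ω (T^[j] x) * g (T^[j] x)

lemma czkey (hgpos : ∀ y, 0 < g y) (hωpos : ∀ y, 0 < ω y) (k : ℕ) (lam : ℝ)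
    (hlam0 : 0 < lam) :
    ∀ n a b, b - a ≤ n → IsDyadic k a b → a < b →
      (Sg T g x a b)⁻¹ * Wg T g ω x a b ≤ lam →
      ∃ L : List (ℕ × ℕ × ℕ × ℕ),
        (∀ q ∈ L, IsDyadicChild k q.1 q.2.1 q.2.2.1 q.2.2.2 ∧
          q.1 < q.2.1 ∧ a ≤ q.1 ∧ q.2.1 ≤ b ∧
          lam < (Sg T g x q.1 q.2.1)⁻¹ * Wg T g ω x q.1 q.2.1 ∧
          (Sg T g x q.1 q.2.1)⁻¹ * Wg T g ω x q.1 q.2.1 ≤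
            ((Sg T g x q.1 q.2.1)⁻¹ * Sg T g x q.2.2.1 q.2.2.2) * lam) ∧
        List.Pairwise (fun p q => Disjoint (Finset.Ico p.1 p.2.1) (Finset.Ico q.1 q.2.1)) L ∧
        ∀ j, a ≤ j → j < b → (∀ q ∈ L, j ∉ Finset.Ico q.1 q.2.1) → ω (T^[j] x) ≤ lam := by
  have hSpos : ∀ a b : ℕ, a < b → 0 < Sg T g x a b := fun a b h =>
    Finset.sum_pos (fun i _ => hgpos _) (Finset.nonempty_Ico.2 h)
  have hVpos : ∀ j : ℕ, 0 < ω (T^[j] x) * g (T^[j] x) := fun j =>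
    mul_pos (hωpos _) (hgpos _)
  intro n
  induction n with
  | zero => intro a b hn _ hab _; omega
  | succ n ih =>
    intro a b hn hdy hab havg
    by_cases hb1 : b = a + 1
    · refine ⟨[], by simp, by simp, ?_⟩
      intro j hj1 hj2 _
      have hS1 : Sg T g x a b = g (T^[a] x) := by
        simp [Sg, hb1]
      have hW1 : Wg T g ω x a b = ω (T^[a] x) * g (T^[a] x) := by
        simp [Wg, hb1]
      rw [hS1, hW1, mul_comm (ω _), ← mul_assoc,
        inv_mul_cancel₀ (hgpos (T^[a] x)).ne', one_mul] at havg
      rw [show j = a from by omega]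
      exact havg
    · have h2 : a + 2 ≤ b := by omega
      set m := a + (b - a + 1) / 2 with hm
      have hm1 : a < m := by omega
      have hm2 : m < b := by omega
      have hdl : IsDyadic k a m := IsDyadic.left hdy h2
      have hdr : IsDyadic k m b := IsDyadic.right hdy h2
      have hWle : Wg T g ω x a b ≤ Sg T g x a b * lam := by
        have h0 : (0:ℝ) < Sg T g x a b := hSpos a b (by omega)
        calc Wg T g ω x a b
            = Sg T g x a b * ((Sg T g x a b)⁻¹ * Wg T g ω x a b) := by
              field_simp
          _ ≤ Sg T g x a b * lam := mul_le_mul_of_nonneg_left havg h0.le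
      -- selection of a whole child
      have hsel : ∀ a' b' : ℕ, a ≤ a' → a' < b' → b' ≤ b →
          (Sg T g x a' b')⁻¹ * Wg T g ω x a' b' ≤
            ((Sg T g x a' b')⁻¹ * Sg T g x a b) * lam := by
        intro a' b' h1 h3 h4
        have hWmono : Wg T g ω x a' b' ≤ Wg T g ω x a b :=
          Finset.sum_le_sum_of_subset_of_nonneg (Finset.Ico_subset_Ico h1 h4)
            (fun i _ _ => (hVpos i).le)
        have hinv : (0:ℝ) ≤ (Sg T g x a' b')⁻¹ :=
          inv_nonneg.2 (hSpos a' b' h3).le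
        calc (Sg T g x a' b')⁻¹ * Wg T g ω x a' b'
            ≤ (Sg T g x a' b')⁻¹ * (Sg T g x a b * lam) :=
              mul_le_mul_of_nonneg_left (hWmono.trans hWle) hinv
          _ = ((Sg T g x a' b')⁻¹ * Sg T g x a b) * lam := by ring
      -- left list
      have hL : ∃ Ll : List (ℕ × ℕ × ℕ × ℕ),
          (∀ q ∈ Ll, IsDyadicChild k q.1 q.2.1 q.2.2.1 q.2.2.2 ∧
            q.1 < q.2.1 ∧ a ≤ q.1 ∧ q.2.1 ≤ m ∧
            lam < (Sg T g x q.1 q.2.1)⁻¹ * Wg T g ω x q.1 q.2.1 ∧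
            (Sg T g x q.1 q.2.1)⁻¹ * Wg T g ω x q.1 q.2.1 ≤
              ((Sg T g x q.1 q.2.1)⁻¹ * Sg T g x q.2.2.1 q.2.2.2) * lam) ∧
          List.Pairwise (fun p q => Disjoint (Finset.Ico p.1 p.2.1) (Finset.Ico q.1 q.2.1)) Ll ∧
          ∀ j, a ≤ j → j < m → (∀ q ∈ Ll, j ∉ Finset.Ico q.1 q.2.1) → ω (T^[j] x) ≤ lam := by
        by_cases hl : (Sg T g x a m)⁻¹ * Wg T g ω x a m ≤ lam
        · exact ih a m (by omega) hdl hm1 hl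
        · refine ⟨[(a, m, a, b)], ?_, by simp, ?_⟩
          · intro q hq
            simp only [List.mem_singleton] at hq
            subst hq
            exact ⟨⟨hdy, h2, Or.inl ⟨rfl, rfl⟩⟩, hm1, le_refl a, le_refl m,
              lt_of_not_ge hl, hsel a m (le_refl a) hm1 hm2.le⟩
          · intro j hj1 hj2 hnot
            exact absurd (Finset.mem_Ico.2 ⟨hj1, hj2⟩)
              (hnot (a, m, a, b) (List.mem_singleton.2 rfl))
      have hR : ∃ Lr : List (ℕ × ℕ × ℕ × ℕ),
          (∀ q ∈ Lr, IsDyadicChild k q.1 q.2.1 q.2.2.1 q.2.2.2 ∧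
            q.1 < q.2.1 ∧ m ≤ q.1 ∧ q.2.1 ≤ b ∧
            lam < (Sg T g x q.1 q.2.1)⁻¹ * Wg T g ω x q.1 q.2.1 ∧
            (Sg T g x q.1 q.2.1)⁻¹ * Wg T g ω x q.1 q.2.1 ≤
              ((Sg T g x q.1 q.2.1)⁻¹ * Sg T g x q.2.2.1 q.2.2.2) * lam) ∧
          List.Pairwise (fun p q => Disjoint (Finset.Ico p.1 p.2.1) (Finset.Ico q.1 q.2.1)) Lr ∧
          ∀ j, m ≤ j → j < b → (∀ q ∈ Lr, j ∉ Finset.Ico q.1 q.2.1) → ω (T^[j] x) ≤ lam := by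
        by_cases hr : (Sg T g x m b)⁻¹ * Wg T g ω x m b ≤ lam
        · exact ih m b (by omega) hdr hm2 hr
        · refine ⟨[(m, b, a, b)], ?_, by simp, ?_⟩
          · intro q hq
            simp only [List.mem_singleton] at hq
            subst hq
            exact ⟨⟨hdy, h2, Or.inr ⟨rfl, rfl⟩⟩, hm2, le_refl m, le_refl b,
              lt_of_not_ge hr, hsel m b hm1.le hm2 (le_refl b)⟩
          · intro j hj1 hj2 hnot
            exact absurd (Finset.mem_Ico.2 ⟨hj1, hj2⟩)
              (hnot (m, b, a, b) (List.mem_singleton.2 rfl))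
      obtain ⟨Ll, hLl1, hLl2, hLl3⟩ := hL
      obtain ⟨Lr, hLr1, hLr2, hLr3⟩ := hR
      refine ⟨Ll ++ Lr, ?_, ?_, ?_⟩
      · intro q hq
        rcases List.mem_append.1 hq with h | h
        · obtain ⟨p1, p2, p3, p4, p5, p6⟩ := hLl1 q h
          exact ⟨p1, p2, p3, p4.trans hm2.le, p5, p6⟩
        · obtain ⟨p1, p2, p3, p4, p5, p6⟩ := hLr1 q h
          exact ⟨p1, p2, hm1.le.trans p3, p4, p5, p6⟩
      · rw [List.pairwise_append]
        refine ⟨hLl2, hLr2, ?_⟩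
        intro p hp q hq
        have h1 := (hLl1 p hp).2.2.2.1
        have h2' := (hLr1 q hq).2.2.1
        simp only [Finset.disjoint_left, Finset.mem_Ico]
        intro j hj1 hj2
        omega
      · intro j hj1 hj2 hnot
        by_cases hjm : j < m
        · exact hLl3 j hj1 hjm (fun q hq => hnot q (List.mem_append_left _ hq))
        · exact hLr3 j (by omega) hj2 (fun q hq => hnot q (List.mem_append_right _ hq))

end Aux

theorem stmt0 {X : Type*} [MeasurableSpace X] (μ : Measure X)
    [IsProbabilityMeasure μ] [NullSingletonClass μ] (hcomp : μ.IsComplete)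
    (T : X → X) (hTbij : Function.Bijective T) (hTerg : Ergodic T μ)
    (g ω : X → ℝ) (hg : Measurable g) (hgpos : ∀ x, 0 < g x)
    (hω : Measurable ω) (hωpos : ∀ x, 0 < ω x)
    (k : ℕ) (hk : 2 ≤ k) (x : X) (lam : ℝ)
    (hlam : (∑ i ∈ Finset.range k, g (T^[i] x))⁻¹ *
      ∑ i ∈ Finset.range k, ω (T^[i] x) * g (T^[i] x) < lam) :
    ∃ (s : ℕ) (a b pa pb : Fin s → ℕ),
      (∀ i, IsDyadicChild k (a i) (b i) (pa i) (pb i)) ∧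
      (∀ i j, i ≠ j → Disjoint (Finset.Ico (a i) (b i)) (Finset.Ico (a j) (b j))) ∧
      (∀ i,
        lam < (∑ j ∈ Finset.Ico (a i) (b i), g (T^[j] x))⁻¹ *
            ∑ j ∈ Finset.Ico (a i) (b i), ω (T^[j] x) * g (T^[j] x) ∧
        (∑ j ∈ Finset.Ico (a i) (b i), g (T^[j] x))⁻¹ *
            ∑ j ∈ Finset.Ico (a i) (b i), ω (T^[j] x) * g (T^[j] x) ≤
          ((∑ j ∈ Finset.Ico (a i) (b i), g (T^[j] x))⁻¹ *
            ∑ j ∈ Finset.Ico (pa i) (pb i), g (T^[j] x)) * lam) ∧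
      (∀ j, j < k → (∀ i, j ∉ Finset.Ico (a i) (b i)) → ω (T^[j] x) ≤ lam) := by
  have hrange : (Sg T g x 0 k)⁻¹ * Wg T g ω x 0 k < lam := by
    simpa only [Sg, Wg, Finset.range_eq_Ico] using hlam
  have hSpos : (0:ℝ) < Sg T g x 0 k :=
    Finset.sum_pos (fun i _ => hgpos _) (Finset.nonempty_Ico.2 (by omega))
  have hWpos : (0:ℝ) < Wg T g ω x 0 k :=
    Finset.sum_pos (fun i _ => mul_pos (hωpos _) (hgpos _)) (Finset.nonempty_Ico.2 (by omega))
  have hlam0 : 0 < lam := lt_trans (mul_pos (inv_pos.2 hSpos) hWpos) hrange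
  obtain ⟨L, hL1, hL2, hL3⟩ := czkey T g ω x hgpos hωpos k lam hlam0 k 0 k (by omega)
    IsDyadic.top (by omega) hrange.le
  refine ⟨L.length, fun i => (L.get i).1, fun i => (L.get i).2.1,
    fun i => (L.get i).2.2.1, fun i => (L.get i).2.2.2, ?_, ?_, ?_, ?_⟩
  · intro i
    exact (hL1 (L.get i) (List.get_mem L i)).1
  · intro i j hij
    have hpw := List.pairwise_iff_get.1 hL2
    rcases lt_or_gt_of_ne hij with h | h
    · exact hpw i j h
    · exact (hpw j i h).symm
  · intro i
    have h := hL1 (L.get i) (List.get_mem L i)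
    exact ⟨by simpa [Sg, Wg] using h.2.2.2.2.1, by simpa [Sg, Wg] using h.2.2.2.2.2⟩
  · intro j hj hnot
    refine hL3 j (by omega) hj ?_
    intro q hq
    obtain ⟨i, hi⟩ := List.mem_iff_get.1 hq
    rw [← hi]
    exact hnot i
end

section
/- Let ω be a weight, let k ≥ 2 be an integer, let x ∈ X be a fixed point, and let λ be a real number with λ > (1/k) Σ_{i=0}^{k-1} ω(T^i x). Then there exists a finite (possibly empty) family of pairwise disjoint dyadic subintervals I_1, …, I_s of {0,1,…,k-1} such that: (a) for each i = 1,…,s, λ < (#I_i)^{-1} Σ_{j∈I_i} ω(T^j x) ≤ 3λ; and (b) if 0 ≤ j ≤ k-1 and j ∉ I_1 ∪ ⋯ ∪ I_s, then ω(T^j x) ≤ λ. -/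
open MeasureTheory Finset

/-- A good family of selected dyadic intervals inside `[c, d)`. -/
def Fam (f : ℕ → ℝ) (lam : ℝ) (k c d : ℕ) (L : List (ℕ × ℕ)) : Prop :=
  (∀ p ∈ L, IsDyadic k p.1 p.2 ∧ c ≤ p.1 ∧ p.1 < p.2 ∧ p.2 ≤ d ∧
    lam * ((p.2 - p.1 : ℕ) : ℝ) < ∑ j ∈ Finset.Ico p.1 p.2, f j ∧
    (∑ j ∈ Finset.Ico p.1 p.2, f j) ≤ 3 * lam * ((p.2 - p.1 : ℕ) : ℝ)) ∧
  List.Pairwise (fun p q => Disjoint (Finset.Ico p.1 p.2) (Finset.Ico q.1 q.2)) L ∧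
  (∀ j, c ≤ j → j < d → (∀ p ∈ L, j ∉ Finset.Ico p.1 p.2) → f j ≤ lam)

lemma czd (f : ℕ → ℝ) (hf : ∀ n, 0 < f n) (lam : ℝ) (k : ℕ) :
    ∀ n a b, b - a ≤ n → IsDyadic k a b → a < b →
      (∑ j ∈ Finset.Ico a b, f j) ≤ lam * ((b - a : ℕ) : ℝ) →
      ∃ L, Fam f lam k a b L := by
  intro n
  induction n with
  | zero => intro a b h _ hab _; exact absurd hab (by omega)
  | succ n ih =>
    intro a b hn hd hab hsum
    have hlampos : 0 < lam := by
      have hpos : 0 < ∑ j ∈ Finset.Ico a b, f j :=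
        Finset.sum_pos (fun i _ => hf i) (Finset.nonempty_Ico.mpr hab)
      have hba0 : 0 < b - a := by omega
      have hba : (0:ℝ) < ((b - a : ℕ):ℝ) := by exact_mod_cast hba0
      nlinarith
    by_cases hb1 : b = a + 1
    · subst hb1
      refine ⟨[], by simp, by simp, ?_⟩
      intro j hj1 hj2 _
      have hj : j = a := by omega
      have h1 : ∑ i ∈ Finset.Ico a (a+1), f i = f a := by simp
      have h2 : ((a + 1 - a : ℕ) : ℝ) = 1 := by norm_num
      rw [h1, h2, mul_one] at hsum
      rw [hj]
      exact hsum
    · have h2 : a + 2 ≤ b := by omega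
      set m := a + (b - a + 1) / 2 with hm
      have ham : a < m := by omega
      have hmb : m < b := by omega
      have child : ∀ c d : ℕ, IsDyadic k c d → a ≤ c → c < d → d ≤ b →
          d - c < b - a → b - a ≤ 3 * (d - c) → ∃ L, Fam f lam k c d L := by
        intro c d hdy hac hcd hdb hstrict hsize
        by_cases hcs : (∑ j ∈ Finset.Ico c d, f j) ≤ lam * ((d - c : ℕ) : ℝ)
        · exact ih c d (by omega) hdy hcd hcs
        · push_neg at hcs
          refine ⟨[(c, d)], ?_, ?_, ?_⟩
          · intro p hp
            simp only [List.mem_singleton] at hp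
            subst hp
            refine ⟨hdy, le_refl _, hcd, le_refl _, hcs, ?_⟩
            have hsub : ∑ j ∈ Finset.Ico c d, f j ≤ ∑ j ∈ Finset.Ico a b, f j :=
              Finset.sum_le_sum_of_subset_of_nonneg
                (Finset.Ico_subset_Ico hac hdb) (fun i _ _ => (hf i).le)
            have hcast : ((b - a : ℕ) : ℝ) ≤ 3 * ((d - c : ℕ) : ℝ) := by
              have : ((b - a : ℕ) : ℝ) ≤ ((3 * (d - c) : ℕ) : ℝ) := Nat.cast_le.mpr hsize
              push_cast at this
              linarith
            nlinarith
          · simp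
          · intro j hj1 hj2 habs
            exact absurd (Finset.mem_Ico.mpr ⟨hj1, hj2⟩) (habs (c,d) (by simp))
      obtain ⟨L1, hL1a, hL1p, hL1u⟩ :=
        child a m (hd.left h2) le_rfl ham hmb.le (by omega) (by omega)
      obtain ⟨L2, hL2a, hL2p, hL2u⟩ :=
        child m b (hd.right h2) ham.le hmb le_rfl (by omega) (by omega)
      refine ⟨L1 ++ L2, ?_, ?_, ?_⟩
      · intro p hp
        rcases List.mem_append.mp hp with h | h
        · obtain ⟨q1, q2, q3, q4, q5, q6⟩ := hL1a p h
          exact ⟨q1, q2, q3, le_trans q4 hmb.le, q5, q6⟩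
        · obtain ⟨q1, q2, q3, q4, q5, q6⟩ := hL2a p h
          exact ⟨q1, le_trans ham.le q2, q3, q4, q5, q6⟩
      · rw [List.pairwise_append]
        refine ⟨hL1p, hL2p, ?_⟩
        intro p hp q hq
        have hpm := (hL1a p hp).2.2.2.1
        have hqm := (hL2a q hq).2.1
        refine Finset.disjoint_left.mpr ?_
        intro j hjp hjq
        have h1 := Finset.mem_Ico.mp hjp
        have h2 := Finset.mem_Ico.mp hjq
        omega
      · intro j hj1 hj2 habs
        by_cases hjm : j < m
        · exact hL1u j hj1 hjm (fun p hp => habs p (List.mem_append.mpr (Or.inl hp)))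
        · exact hL2u j (by omega) hj2 (fun p hp => habs p (List.mem_append.mpr (Or.inr hp)))

theorem stmt1 {X : Type*} [MeasurableSpace X] (μ : Measure X)
    [IsProbabilityMeasure μ] [NullSingletonClass μ] (hcomp : μ.IsComplete)
    (T : X → X) (hTbij : Function.Bijective T) (hTerg : Ergodic T μ)
    (ω : X → ℝ) (hω : Measurable ω) (hωpos : ∀ x, 0 < ω x)
    (k : ℕ) (hk : 2 ≤ k) (x : X) (lam : ℝ)
    (hlam : (k : ℝ)⁻¹ * ∑ i ∈ Finset.range k, ω (T^[i] x) < lam) :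
    ∃ (s : ℕ) (a b : Fin s → ℕ),
      (∀ i, IsDyadic k (a i) (b i)) ∧
      (∀ i j, i ≠ j → Disjoint (Finset.Ico (a i) (b i)) (Finset.Ico (a j) (b j))) ∧
      (∀ i,
        lam < ((Finset.Ico (a i) (b i)).card : ℝ)⁻¹ *
            ∑ j ∈ Finset.Ico (a i) (b i), ω (T^[j] x) ∧
        ((Finset.Ico (a i) (b i)).card : ℝ)⁻¹ *
            ∑ j ∈ Finset.Ico (a i) (b i), ω (T^[j] x) ≤ 3 * lam) ∧
      (∀ j, j < k → (∀ i, j ∉ Finset.Ico (a i) (b i)) → ω (T^[j] x) ≤ lam) := by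
  classical
  set f : ℕ → ℝ := fun j => ω (T^[j] x) with hfdef
  have hk0 : 0 < k := by omega
  have hkR : (0:ℝ) < (k:ℝ) := Nat.cast_pos.mpr hk0
  have hsum : (∑ j ∈ Finset.Ico 0 k, f j) ≤ lam * ((k - 0 : ℕ) : ℝ) := by
    have h1 : (k:ℝ) * ((k : ℝ)⁻¹ * ∑ i ∈ Finset.range k, f i) < (k:ℝ) * lam :=
      mul_lt_mul_of_pos_left hlam hkR
    rw [← mul_assoc, mul_inv_cancel₀ (ne_of_gt hkR), one_mul] at h1
    rw [← Finset.range_eq_Ico]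
    simp only [Nat.sub_zero]
    linarith
  obtain ⟨L, hLa, hLp, hLu⟩ :=
    czd f (fun j => hωpos _) lam k k 0 k (by omega) IsDyadic.top hk0 hsum
  refine ⟨L.length, fun i => (L.get i).1, fun i => (L.get i).2, ?_, ?_, ?_, ?_⟩
  · intro i
    exact (hLa _ (L.get_mem i)).1
  · rw [List.pairwise_iff_getElem] at hLp
    intro i j hij
    rcases lt_trichotomy i.val j.val with h | h | h
    · have := hLp i.val j.val i.isLt j.isLt h
      simpa [List.get_eq_getElem] using this
    · exact absurd (Fin.ext h) hij
    · have := hLp j.val i.val j.isLt i.isLt h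
      simpa [List.get_eq_getElem] using this.symm
  · intro i
    obtain ⟨_, _, h3, _, h5, h6⟩ := hLa _ (L.get_mem i)
    set p := L.get i
    have hcard : (Finset.Ico p.1 p.2).card = p.2 - p.1 := Nat.card_Ico _ _
    have hnpos : (0:ℝ) < ((p.2 - p.1 : ℕ) : ℝ) := Nat.cast_pos.mpr (by omega)
    rw [hcard]
    constructor
    · rw [inv_mul_eq_div, lt_div_iff₀ hnpos]
      linarith [h5, mul_comm lam ((p.2 - p.1 : ℕ) : ℝ)]
    · rw [inv_mul_eq_div, div_le_iff₀ hnpos]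
      linarith [h6]
  · intro j hj hnot
    refine hLu j (Nat.zero_le _) hj ?_
    intro p hp
    obtain ⟨i, hi⟩ := List.mem_iff_get.mp hp
    rw [← hi]
    exact hnot i
end

section
/- Let ω be a weight. If ω ∈ A^avg_∞, then ω ∈ A^λ_∞. -/
open MeasureTheory Finset

/-- The ergodic average `T_{0,k-1}ω(x) = (1/k) ∑_{i=0}^{k-1} ω(Tⁱx)`. -/
noncomputable def ergAvg {X : Type*} (T : X → X) (ω : X → ℝ) (k : ℕ) (x : X) : ℝ :=
  (k : ℝ)⁻¹ * ∑ i ∈ Finset.range k, ω (T^[i] x)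

/-- `ω ∈ A^avg_∞`. -/
def MemAavg {X : Type*} [MeasurableSpace X] (μ : Measure X) (T : X → X) (ω : X → ℝ) : Prop :=
  ∃ γ δ : ℝ, 0 < γ ∧ γ < 1 ∧ 0 < δ ∧ δ < 1 ∧
    ∀ᵐ x ∂μ, ∀ k : ℕ, 0 < k →
      ((((Finset.range k).filter fun j => ω (T^[j] x) ≤ γ * ergAvg T ω k x).card : ℝ) / k ≤ δ)

/-- `ω ∈ A^λ_∞`. -/
def MemAlam {X : Type*} [MeasurableSpace X] (μ : Measure X) (T : X → X) (ω : X → ℝ) : Prop :=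
  ∃ C β : ℝ, 0 < C ∧ 0 < β ∧
    ∀ᵐ x ∂μ, ∀ k : ℕ, 0 < k → ∀ lam : ℝ, ergAvg T ω k x < lam →
      ∑ i ∈ (Finset.range k).filter (fun i => lam < ω (T^[i] x)), ω (T^[i] x) ≤
        C * lam * (((Finset.range k).filter fun i => β * lam < ω (T^[i] x)).card : ℝ)

private lemma sum_range_split (f : ℕ → ℝ) (s ℓ₁ ℓ₂ : ℕ) :
    ∑ j ∈ Finset.range (ℓ₁ + ℓ₂), f (s + j)
      = ∑ j ∈ Finset.range ℓ₁, f (s + j) + ∑ j ∈ Finset.range ℓ₂, f ((s + ℓ₁) + j) := by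
  rw [Finset.sum_range_add (fun j => f (s + j)) ℓ₁ ℓ₂]
  congr 1
  exact Finset.sum_congr rfl fun j _ => congrArg f (by omega)

/-- Key combinatorial lemma: Calderón–Zygmund type stopping via bisection. -/
private lemma key (a : ℕ → ℝ) (ha : ∀ i, 0 < a i) (γ δ : ℝ) (hγ : 0 < γ) (hδ : δ < 1)
    (H : ∀ s ℓ : ℕ, 0 < ℓ →
      (1 - δ) * ℓ ≤ ∑ j ∈ Finset.range ℓ,
        (if γ * ((ℓ : ℝ)⁻¹ * ∑ i ∈ Finset.range ℓ, a (s + i)) < a (s + j) then (1:ℝ) else 0))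
    (lam : ℝ) (hlam : 0 < lam) :
    ∀ ℓ : ℕ, ∀ s : ℕ, (∑ j ∈ Finset.range ℓ, a (s + j)) ≤ lam * ℓ →
      ∑ j ∈ Finset.range ℓ, (if lam < a (s + j) then a (s + j) else 0) ≤
        3 / (1 - δ) * lam * ∑ j ∈ Finset.range ℓ, (if γ * lam < a (s + j) then (1:ℝ) else 0) := by
  have h1δ : (0:ℝ) < 1 - δ := by linarith
  intro ℓ
  induction ℓ using Nat.strong_induction_on with
  | _ ℓ IH =>
  intro s hS
  by_cases h2 : 2 ≤ ℓ
  · -- split into two halves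
    obtain ⟨ℓ₁, ℓ₂, hpos1, hpos2, hsum, h31, h32⟩ :
        ∃ ℓ₁ ℓ₂ : ℕ, 0 < ℓ₁ ∧ 0 < ℓ₂ ∧ ℓ₁ + ℓ₂ = ℓ ∧ ℓ ≤ 3 * ℓ₁ ∧ ℓ ≤ 3 * ℓ₂ :=
      ⟨ℓ / 2, ℓ - ℓ / 2, by omega, by omega, by omega, by omega, by omega⟩
    -- handling one child
    have child : ∀ s' ℓ' : ℕ, 0 < ℓ' → ℓ' < ℓ →
        (∑ j ∈ Finset.range ℓ', a (s' + j)) ≤ 3 * (lam * ℓ') →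
        ∑ j ∈ Finset.range ℓ', (if lam < a (s' + j) then a (s' + j) else 0) ≤
          3 / (1 - δ) * lam * ∑ j ∈ Finset.range ℓ', (if γ * lam < a (s' + j) then (1:ℝ) else 0) := by
      intro s' ℓ' hpos hlt hb
      by_cases hc : (∑ j ∈ Finset.range ℓ', a (s' + j)) ≤ lam * ℓ'
      · exact IH ℓ' hlt s' hc
      · push_neg at hc
        have hℓ'R : (0:ℝ) < (ℓ' : ℝ) := by exact_mod_cast hpos
        have havg : lam < (ℓ' : ℝ)⁻¹ * ∑ i ∈ Finset.range ℓ', a (s' + i) := by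
          rw [inv_mul_eq_div, lt_div_iff₀ hℓ'R]; linarith
        have hcount := H s' ℓ' hpos
        have hmono : ∑ j ∈ Finset.range ℓ',
              (if γ * ((ℓ' : ℝ)⁻¹ * ∑ i ∈ Finset.range ℓ', a (s' + i)) < a (s' + j) then (1:ℝ) else 0)
            ≤ ∑ j ∈ Finset.range ℓ', (if γ * lam < a (s' + j) then (1:ℝ) else 0) := by
          apply Finset.sum_le_sum
          intro j _
          by_cases hj : γ * ((ℓ' : ℝ)⁻¹ * ∑ i ∈ Finset.range ℓ', a (s' + i)) < a (s' + j)
          · rw [if_pos hj, if_pos ((mul_lt_mul_of_pos_left havg hγ).trans hj)]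
          · rw [if_neg hj]; split <;> norm_num
        have hLHS : ∑ j ∈ Finset.range ℓ', (if lam < a (s' + j) then a (s' + j) else 0)
            ≤ ∑ j ∈ Finset.range ℓ', a (s' + j) := by
          apply Finset.sum_le_sum
          intro j _
          split
          · exact le_rfl
          · exact (ha _).le
        have hc2 : (1 - δ) * ℓ' ≤ ∑ j ∈ Finset.range ℓ', (if γ * lam < a (s' + j) then (1:ℝ) else 0) :=
          le_trans hcount hmono
        have hpos3 : (0:ℝ) ≤ 3 / (1 - δ) * lam := by positivity
        have hkey2 : 3 / (1 - δ) * lam * ((1 - δ) * ℓ') = 3 * (lam * ℓ') := by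
          field_simp
        calc ∑ j ∈ Finset.range ℓ', (if lam < a (s' + j) then a (s' + j) else 0)
            ≤ ∑ j ∈ Finset.range ℓ', a (s' + j) := hLHS
          _ ≤ 3 * (lam * ℓ') := hb
          _ = 3 / (1 - δ) * lam * ((1 - δ) * ℓ') := hkey2.symm
          _ ≤ 3 / (1 - δ) * lam * ∑ j ∈ Finset.range ℓ', (if γ * lam < a (s' + j) then (1:ℝ) else 0) :=
              mul_le_mul_of_nonneg_left hc2 hpos3
    rw [← hsum] at hS ⊢
    have eS := sum_range_split a s ℓ₁ ℓ₂
    have eL := sum_range_split (fun i => if lam < a i then a i else 0) s ℓ₁ ℓ₂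
    have eC := sum_range_split (fun i => if γ * lam < a i then (1:ℝ) else 0) s ℓ₁ ℓ₂
    rw [eL, eC]
    rw [eS] at hS
    push_cast at hS
    have hnn1 : (0:ℝ) ≤ ∑ j ∈ Finset.range ℓ₁, a (s + j) :=
      Finset.sum_nonneg fun j _ => (ha _).le
    have hnn2 : (0:ℝ) ≤ ∑ j ∈ Finset.range ℓ₂, a ((s + ℓ₁) + j) :=
      Finset.sum_nonneg fun j _ => (ha _).le
    have hc1 : ((ℓ₁:ℝ) + ℓ₂) ≤ 3 * ℓ₁ := by
      have : ℓ₁ + ℓ₂ ≤ 3 * ℓ₁ := by omega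
      exact_mod_cast this
    have hc2 : ((ℓ₁:ℝ) + ℓ₂) ≤ 3 * ℓ₂ := by
      have : ℓ₁ + ℓ₂ ≤ 3 * ℓ₂ := by omega
      exact_mod_cast this
    have hb1 : (∑ j ∈ Finset.range ℓ₁, a (s + j)) ≤ 3 * (lam * ℓ₁) := by
      nlinarith [mul_le_mul_of_nonneg_left hc1 hlam.le]
    have hb2 : (∑ j ∈ Finset.range ℓ₂, a ((s + ℓ₁) + j)) ≤ 3 * (lam * ℓ₂) := by
      nlinarith [mul_le_mul_of_nonneg_left hc2 hlam.le]
    have B1 := child s ℓ₁ hpos1 (by omega) hb1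
    have B2 := child (s + ℓ₁) ℓ₂ hpos2 (by omega) hb2
    have hdist := mul_add (3 / (1 - δ) * lam)
      (∑ j ∈ Finset.range ℓ₁, (if γ * lam < a (s + j) then (1:ℝ) else 0))
      (∑ j ∈ Finset.range ℓ₂, (if γ * lam < a ((s + ℓ₁) + j) then (1:ℝ) else 0))
    linarith
  · -- ℓ = 0 or ℓ = 1
    push_neg at h2
    interval_cases ℓ
    · simp
    · simp only [Finset.sum_range_one] at hS ⊢
      have h0 : ¬ lam < a (s + 0) := by push_cast at hS; linarith
      rw [if_neg h0]
      have h1 : (0:ℝ) ≤ if γ * lam < a (s + 0) then (1:ℝ) else 0 := by split <;> norm_num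
      have h2' : (0:ℝ) ≤ 3 / (1 - δ) * lam := by positivity
      nlinarith

theorem stmt2 {X : Type*} [MeasurableSpace X] (μ : Measure X)
    [IsProbabilityMeasure μ] [NullSingletonClass μ] (hcomp : μ.IsComplete)
    (T : X → X) (hTbij : Function.Bijective T) (hTerg : Ergodic T μ)
    (ω : X → ℝ) (hω : Measurable ω) (hωpos : ∀ x, 0 < ω x)
    (h : MemAavg μ T ω) :
    MemAlam μ T ω := by
  obtain ⟨γ, δ, hγ0, hγ1, hδ0, hδ1, hae⟩ := h
  have h1δ : (0:ℝ) < 1 - δ := by linarith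
  set P : X → Prop := fun y => ∀ k : ℕ, 0 < k →
    ((((Finset.range k).filter fun j => ω (T^[j] y) ≤ γ * ergAvg T ω k y).card : ℝ) / k ≤ δ)
    with hP
  have hae' : ∀ᵐ x ∂μ, P x := hae
  have hiter : ∀ n : ℕ, MeasurePreserving (T^[n]) μ μ := fun n =>
    hTerg.toMeasurePreserving.iterate n
  have hG : ∀ᵐ x ∂μ, ∀ n : ℕ, P (T^[n] x) := by
    rw [MeasureTheory.ae_all_iff]
    intro n
    exact MeasureTheory.ae_of_ae_map (hiter n).measurable.aemeasurable
      (by rwa [(hiter n).map_eq])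
  refine ⟨3 / (1 - δ), γ, by positivity, hγ0, ?_⟩
  filter_upwards [hG] with x hx
  intro k hk lam hlam
  -- build the hypothesis H of the key lemma
  have H : ∀ s ℓ : ℕ, 0 < ℓ →
      (1 - δ) * ℓ ≤ ∑ j ∈ Finset.range ℓ,
        (if γ * ((ℓ : ℝ)⁻¹ * ∑ i ∈ Finset.range ℓ, ω (T^[s + i] x)) < ω (T^[s + j] x)
          then (1:ℝ) else 0) := by
    intro s ℓ hℓ
    have hp := hx s ℓ hℓ
    have hsh : ∀ j : ℕ, ω (T^[j] (T^[s] x)) = ω (T^[s + j] x) := by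
      intro j
      rw [← Function.iterate_add_apply, Nat.add_comm j s]
    have hav : ergAvg T ω ℓ (T^[s] x) = (ℓ : ℝ)⁻¹ * ∑ i ∈ Finset.range ℓ, ω (T^[s + i] x) := by
      rw [ergAvg]
      congr 1
      exact Finset.sum_congr rfl fun i _ => hsh i
    have hfil : (Finset.range ℓ).filter
          (fun j => ω (T^[j] (T^[s] x)) ≤ γ * ergAvg T ω ℓ (T^[s] x))
        = (Finset.range ℓ).filter
          (fun j => ω (T^[s + j] x) ≤ γ * ((ℓ : ℝ)⁻¹ * ∑ i ∈ Finset.range ℓ, ω (T^[s + i] x))) := by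
      apply Finset.filter_congr
      intro j _
      rw [hsh j, hav]
    rw [hfil] at hp
    have hℓR : (0:ℝ) < (ℓ : ℝ) := by exact_mod_cast hℓ
    rw [div_le_iff₀ hℓR] at hp
    rw [Finset.sum_boole]
    have hneg : (Finset.range ℓ).filter
          (fun j => γ * ((ℓ : ℝ)⁻¹ * ∑ i ∈ Finset.range ℓ, ω (T^[s + i] x)) < ω (T^[s + j] x))
        = (Finset.range ℓ).filter
          (fun j => ¬ (ω (T^[s + j] x) ≤ γ * ((ℓ : ℝ)⁻¹ * ∑ i ∈ Finset.range ℓ, ω (T^[s + i] x)))) := by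
      apply Finset.filter_congr
      intro j _
      exact not_le.symm
    rw [hneg]
    have hcompl := Finset.card_filter_add_card_filter_not (s := Finset.range ℓ)
      (p := fun j => ω (T^[s + j] x) ≤ γ * ((ℓ : ℝ)⁻¹ * ∑ i ∈ Finset.range ℓ, ω (T^[s + i] x)))
    rw [Finset.card_range] at hcompl
    have hcomplR : ((((Finset.range ℓ).filter
          (fun j => ω (T^[s + j] x) ≤ γ * ((ℓ : ℝ)⁻¹ * ∑ i ∈ Finset.range ℓ, ω (T^[s + i] x)))).card : ℝ)
        + (((Finset.range ℓ).filter
          (fun j => ¬ (ω (T^[s + j] x) ≤ γ * ((ℓ : ℝ)⁻¹ * ∑ i ∈ Finset.range ℓ, ω (T^[s + i] x))))).card : ℝ))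
        = (ℓ : ℝ) := by exact_mod_cast hcompl
    linarith
  have hkR : (0:ℝ) < (k : ℝ) := by exact_mod_cast hk
  have hergpos : 0 < ergAvg T ω k x := by
    rw [ergAvg]
    have : 0 < ∑ i ∈ Finset.range k, ω (T^[i] x) :=
      Finset.sum_pos (fun i _ => hωpos _) (Finset.nonempty_range_iff.mpr hk.ne')
    positivity
  have hlam0 : 0 < lam := hergpos.trans hlam
  have hS0 : ∑ j ∈ Finset.range k, ω (T^[0 + j] x) ≤ lam * k := by
    simp only [Nat.zero_add]
    simp only [ergAvg] at hlam
    rw [inv_mul_eq_div, div_lt_iff₀ hkR] at hlam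
    linarith
  have hkey := key (fun i => ω (T^[i] x)) (fun i => hωpos _) γ δ hγ0 hδ1 H lam hlam0 k 0 hS0
  simp only [Nat.zero_add] at hkey
  rw [Finset.sum_boole] at hkey
  rw [Finset.sum_filter]
  exact hkey
end

section
/- Let ω be a weight. If ω ∈ A^λ_∞, then there exist constants C, q > 1 such that ω ∈ RH_q, i.e., ω satisfies the reverse Hölder inequality ((1/k) Σ_{i=0}^{k-1} ω(T^i x)^q)^{1/q} ≤ C·(1/k) Σ_{i=0}^{k-1} ω(T^i x) for a.e. x ∈ X and every positive integer k. -/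
open MeasureTheory Finset

/-- `ω ∈ RH_q` with constant `C`. -/
def MemRH {X : Type*} [MeasurableSpace X] (μ : Measure X) (T : X → X) (ω : X → ℝ)
    (C q : ℝ) : Prop :=
  ∀ᵐ x ∂μ, ∀ k : ℕ, 0 < k →
    ((k : ℝ)⁻¹ * ∑ i ∈ Finset.range k, ω (T^[i] x) ^ q) ^ (1 / q) ≤
      C * ((k : ℝ)⁻¹ * ∑ i ∈ Finset.range k, ω (T^[i] x))

/- ### Auxiliary integral lemmas -/

private lemma intble {a M : ℝ} (r w : ℝ) (ha : 0 < a) (hM : 0 < M) :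
    IntervalIntegrable (fun t => if t < w then t ^ r else 0) volume a M := by
  have hc : ContinuousOn (fun t : ℝ => t ^ r) (Set.uIcc a M) := by
    apply ContinuousOn.rpow_const continuousOn_id
    intro x hx
    left
    have h0 : (0:ℝ) < min a M := lt_min ha hM
    exact (h0.trans_le hx.1).ne'
  have hg := hc.intervalIntegrable (μ := volume)
  rw [intervalIntegrable_iff] at hg ⊢
  have heq : (fun t => if t < w then t ^ r else 0) =
      (Set.Iio w).indicator (fun t : ℝ => t ^ r) := by
    funext t
    simp [Set.indicator_apply]
  rw [heq]
  exact hg.indicator measurableSet_Iio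

private lemma indic_nonneg {a M : ℝ} (r w : ℝ) (ha : 0 ≤ a) (haM : a ≤ M) :
    0 ≤ ∫ t in a..M, (if t < w then t ^ r else 0) := by
  apply intervalIntegral.integral_nonneg haM
  intro t ht
  have h0 : 0 ≤ t := ha.trans ht.1
  split_ifs
  · exact Real.rpow_nonneg h0 r
  · exact le_refl 0

private lemma indic_eq {a w M : ℝ} (r : ℝ) (ha : 0 < a) (haw : a < w) (hwM : w ≤ M)
    (hr : r ≠ -1) :
    ∫ t in a..M, (if t < w then t ^ r else 0) = (w ^ (r+1) - a ^ (r+1)) / (r+1) := by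
  have hw : 0 < w := ha.trans haw
  have hM : 0 < M := hw.trans_le hwM
  have h1 := intble r w ha hw
  have h2 := intble r w hw hM
  rw [← intervalIntegral.integral_add_adjacent_intervals h1 h2]
  have e2 : ∫ t in w..M, (if t < w then t ^ r else 0) = 0 := by
    rw [intervalIntegral.integral_congr (g := fun _ => (0:ℝ)) ?_]
    · exact intervalIntegral.integral_zero
    · intro t ht
      rw [Set.uIcc_of_le hwM] at ht
      simp [not_lt.2 ht.1]
  have hae : ∀ᵐ t : ℝ ∂volume, t ≠ w := by
    rw [MeasureTheory.ae_iff]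
    simp [not_not, Set.setOf_eq_eq_singleton, measure_singleton]
  have e1 : ∫ t in a..w, (if t < w then t ^ r else 0) = ∫ t in a..w, t ^ r := by
    apply intervalIntegral.integral_congr_ae
    filter_upwards [hae] with t ht hmem
    rw [Set.uIoc_of_le haw.le] at hmem
    have : t < w := lt_of_le_of_ne hmem.2 ht
    simp [this]
  have h0 : (0:ℝ) ∉ Set.uIcc a w := by
    rw [Set.uIcc_of_le haw.le]
    intro hmem
    exact absurd hmem.1 (not_le.2 ha)
  rw [e1, e2, integral_rpow (Or.inr ⟨hr, h0⟩), add_zero]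

private lemma indic_le {a M w : ℝ} (r : ℝ) (ha : 0 < a) (haM : a ≤ M) (hr : -1 < r)
    (hw : 0 < w) :
    ∫ t in a..M, (if t < w then t ^ r else 0) ≤ w ^ (r+1) / (r+1) := by
  have hr1 : 0 < r + 1 := by linarith
  have hwr : 0 < w ^ (r+1) := Real.rpow_pos_of_pos hw _
  rcases le_or_gt w a with hwa | haw
  · have hz : ∫ t in a..M, (if t < w then t ^ r else 0) = 0 := by
      rw [intervalIntegral.integral_congr (g := fun _ => (0:ℝ)) ?_]
      · exact intervalIntegral.integral_zero
      · intro t ht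
        rw [Set.uIcc_of_le haM] at ht
        simp [not_lt.2 (hwa.trans ht.1)]
    rw [hz]
    positivity
  · rcases le_or_gt w M with hwM | hMw
    · rw [indic_eq r ha haw hwM (by linarith)]
      have h0 : 0 ≤ a ^ (r+1) := Real.rpow_nonneg ha.le _
      gcongr
      linarith
    · have he : ∫ t in a..M, (if t < w then t ^ r else 0) = ∫ t in a..M, t ^ r := by
        apply intervalIntegral.integral_congr
        intro t ht
        rw [Set.uIcc_of_le haM] at ht
        simp [ht.2.trans_lt hMw]
      have h0 : (0:ℝ) ∉ Set.uIcc a M := by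
        rw [Set.uIcc_of_le haM]
        intro hmem
        exact absurd hmem.1 (not_le.2 ha)
      rw [he, integral_rpow (Or.inr ⟨by linarith, h0⟩)]
      have hM0 : 0 ≤ M := ha.le.trans haM
      have h1 : M ^ (r+1) ≤ w ^ (r+1) := Real.rpow_le_rpow hM0 hMw.le hr1.le
      have h2 : 0 ≤ a ^ (r+1) := Real.rpow_nonneg ha.le _
      gcongr
      linarith


private lemma key_s3 {C β q : ℝ} (hC : 0 < C) (hβ : 0 < β) (hq1 : 1 < q)
    (hsmall : (q - 1) * C * β ^ (-q) ≤ q / 2)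
    {k : ℕ} (hk : 0 < k) (w : ℕ → ℝ) (hw : ∀ i, 0 < w i)
    (hyp : ∀ lam : ℝ, (k:ℝ)⁻¹ * ∑ i ∈ Finset.range k, w i < lam →
      ∑ i ∈ (Finset.range k).filter (fun i => lam < w i), w i ≤
        C * lam * (((Finset.range k).filter fun i => β * lam < w i).card : ℝ)) :
    ((k:ℝ)⁻¹ * ∑ i ∈ Finset.range k, w i ^ q) ^ (1/q) ≤
      2 * ((k:ℝ)⁻¹ * ∑ i ∈ Finset.range k, w i) := by
  have hq0 : 0 < q := by linarith
  have hk0 : (0:ℝ) < k := by exact_mod_cast hk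
  set s := Finset.range k with hs
  have hSpos : 0 < ∑ i ∈ s, w i := by
    apply Finset.sum_pos (fun i _ => hw i)
    rw [hs, Finset.nonempty_range_iff]
    exact hk.ne'
  set A : ℝ := (k:ℝ)⁻¹ * ∑ i ∈ s, w i with hA
  have hApos : 0 < A := mul_pos (inv_pos.2 hk0) hSpos
  set M : ℝ := A + ∑ i ∈ s, w i with hM
  have hAM : A ≤ M := le_add_of_nonneg_right hSpos.le
  have hMpos : 0 < M := hApos.trans_le hAM
  have hwM : ∀ i ∈ s, w i ≤ M := by
    intro i hi
    have h1 : w i ≤ ∑ j ∈ s, w j := Finset.single_le_sum (fun j _ => (hw j).le) hi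
    have := hApos
    rw [hM]; linarith
  -- Step 1 : pointwise layer-cake bound
  have step1 : ∀ i ∈ s, w i ^ q ≤ w i * A ^ (q-1)
      + (q-1) * (w i * ∫ t in A..M, (if t < w i then t ^ (q-2) else 0)) := by
    intro i hi
    have hwi := hw i
    have hsplit : w i ^ q = w i * w i ^ (q-1) := by
      nth_rewrite 1 [show q = 1 + (q-1) by ring]
      rw [Real.rpow_add hwi, Real.rpow_one]
    rcases le_or_gt (w i) A with hle | hlt
    · have h1 : w i ^ (q-1) ≤ A ^ (q-1) := Real.rpow_le_rpow hwi.le hle (by linarith)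
      have h2 : 0 ≤ ∫ t in A..M, (if t < w i then t ^ (q-2) else 0) :=
        indic_nonneg (q-2) (w i) hApos.le hAM
      have h3 : w i * w i ^ (q-1) ≤ w i * A ^ (q-1) :=
        mul_le_mul_of_nonneg_left h1 hwi.le
      have h4 : 0 ≤ (q-1) * (w i * ∫ t in A..M, (if t < w i then t ^ (q-2) else 0)) :=
        mul_nonneg (by linarith) (mul_nonneg hwi.le h2)
      linarith
    · rw [indic_eq (q-2) hApos hlt (hwM i hi) (by linarith)]
      have e : q - 2 + 1 = q - 1 := by ring
      rw [e]
      have hq1' : q - 1 ≠ 0 := by linarith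
      have e2 : (q-1) * (w i * ((w i ^ (q-1) - A ^ (q-1)) / (q-1)))
          = w i * w i ^ (q-1) - w i * A ^ (q-1) := by
        field_simp
      rw [e2, hsplit]
      linarith
  -- notation for the two integrands
  set F : ℝ → ℝ := fun t => ∑ i ∈ s, w i * (if t < w i then t ^ (q-2) else 0) with hF
  set G : ℝ → ℝ := fun t => ∑ i ∈ s, C * (if t < w i / β then t ^ (q-1) else 0) with hG
  have intbleF : ∀ (r : ℝ) (c v : ℝ), IntervalIntegrable
      (fun t => c * (if t < v then t ^ r else 0)) volume A M :=
    fun r c v => (intble r v hApos hMpos).const_mul c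
  have intF : IntervalIntegrable F volume A M := by
    rw [hF, intervalIntegrable_iff] at *
    exact MeasureTheory.integrable_finset_sum s
      (fun i _ => (intbleF (q-2) (w i) (w i)).def')
  have intG : IntervalIntegrable G volume A M := by
    rw [hG, intervalIntegrable_iff]
    exact MeasureTheory.integrable_finset_sum s
      (fun i _ => (intbleF (q-1) C (w i / β)).def')
  -- Step 2 : sum of integrals = integral of F
  have step2 : ∑ i ∈ s, w i * ∫ t in A..M, (if t < w i then t ^ (q-2) else 0)
      = ∫ t in A..M, F t := by
    rw [hF, intervalIntegral.integral_finset_sum (fun i _ =>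
      (intble (q-2) (w i) hApos hMpos).const_mul _)]
    refine Finset.sum_congr rfl fun i _ => ?_
    rw [← intervalIntegral.integral_const_mul]
  -- Step 3 : pointwise comparison F ≤ G a.e. on [A, M]
  have step3 : ∫ t in A..M, F t ≤ ∫ t in A..M, G t := by
    apply intervalIntegral.integral_mono_ae_restrict hAM intF intG
    have hane : ∀ᵐ t : ℝ ∂volume, t ≠ A := by
      rw [MeasureTheory.ae_iff]
      simp [not_not, Set.setOf_eq_eq_singleton, measure_singleton]
    filter_upwards [MeasureTheory.ae_restrict_mem measurableSet_Icc,
      MeasureTheory.ae_restrict_of_ae hane] with t hmem hne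
    have htA : A < t := lt_of_le_of_ne hmem.1 (Ne.symm hne)
    have ht0 : 0 < t := hApos.trans htA
    have hflt : (s.filter fun i => t < w i / β) = s.filter fun i => β * t < w i := by
      apply Finset.filter_congr
      intro i _
      rw [lt_div_iff₀ hβ, mul_comm]
    have hGt : G t = C * t ^ (q-1) * ((s.filter fun i => β * t < w i).card : ℝ) := by
      rw [hG]
      simp only [mul_ite, mul_zero]
      rw [← Finset.sum_filter, hflt, Finset.sum_const, nsmul_eq_mul]
      ring
    have hFt : F t = (∑ i ∈ s.filter (fun i => t < w i), w i) * t ^ (q-2) := by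
      rw [hF, Finset.sum_filter, Finset.sum_mul]
      refine Finset.sum_congr rfl fun i _ => ?_
      split_ifs <;> simp
    have hhyp := hyp t htA
    have htq : t ^ (q-2) * t = t ^ (q-1) := by
      nth_rewrite 2 [← Real.rpow_one t]
      rw [← Real.rpow_add ht0]
      congr 1
      ring
    calc F t = (∑ i ∈ s.filter (fun i => t < w i), w i) * t ^ (q-2) := hFt
      _ ≤ (C * t * ((s.filter fun i => β * t < w i).card : ℝ)) * t ^ (q-2) :=
          mul_le_mul_of_nonneg_right hhyp (Real.rpow_nonneg ht0.le _)
      _ = C * (t ^ (q-2) * t) * ((s.filter fun i => β * t < w i).card : ℝ) := by ring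
      _ = G t := by rw [htq, hGt]
  -- Step 4 : integral of G is bounded
  have step4 : ∫ t in A..M, G t ≤ C * β ^ (-q) / q * ∑ i ∈ s, w i ^ q := by
    rw [hG, intervalIntegral.integral_finset_sum (fun i _ =>
      (intble (q-1) (w i / β) hApos hMpos).const_mul _)]
    have hbd : ∀ i ∈ s, (∫ t in A..M, C * (if t < w i / β then t ^ (q-1) else 0))
        ≤ C * (β ^ (-q) / q * w i ^ q) := by
      intro i _
      rw [intervalIntegral.integral_const_mul]
      apply mul_le_mul_of_nonneg_left ?_ hC.le
      have h1 := indic_le (q-1) hApos hAM (by linarith) (div_pos (hw i) hβ)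
      rw [show q - 1 + 1 = q by ring] at h1
      have h2 : (w i / β) ^ q = w i ^ q * β ^ (-q) := by
        rw [Real.div_rpow (hw i).le hβ.le, Real.rpow_neg hβ.le, div_eq_mul_inv]
      calc (∫ t in A..M, (if t < w i / β then t ^ (q-1) else 0))
          ≤ (w i / β) ^ q / q := h1
        _ = β ^ (-q) / q * w i ^ q := by rw [h2]; ring
    calc ∑ i ∈ s, (∫ t in A..M, C * (if t < w i / β then t ^ (q-1) else 0))
        ≤ ∑ i ∈ s, C * (β ^ (-q) / q * w i ^ q) := Finset.sum_le_sum hbd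
      _ = C * β ^ (-q) / q * ∑ i ∈ s, w i ^ q := by
          rw [Finset.mul_sum]
          refine Finset.sum_congr rfl fun i _ => ?_
          ring
  -- Combine
  set Wq : ℝ := ∑ i ∈ s, w i ^ q with hWqdef
  have hWq0 : 0 ≤ Wq := Finset.sum_nonneg fun i _ => Real.rpow_nonneg (hw i).le q
  have hsum1 : Wq ≤ (k:ℝ) * A ^ q + (q-1) * ∫ t in A..M, F t := by
    have h1 : Wq ≤ ∑ i ∈ s, (w i * A ^ (q-1)
        + (q-1) * (w i * ∫ t in A..M, (if t < w i then t ^ (q-2) else 0))) :=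
      Finset.sum_le_sum step1
    rw [Finset.sum_add_distrib, ← Finset.sum_mul, ← Finset.mul_sum] at h1
    have h2 : (∑ i ∈ s, w i) * A ^ (q-1) = (k:ℝ) * A ^ q := by
      have e1 : (∑ i ∈ s, w i) = (k:ℝ) * A := by
        rw [hA]
        field_simp
      have e3 : A * A ^ (q-1) = A ^ q := by
        have e4 := Real.rpow_add hApos 1 (q-1)
        rw [Real.rpow_one] at e4
        rw [← e4]
        congr 1
        ring
      rw [e1, mul_assoc, e3]
    rw [h2, step2] at h1
    exact h1
  have hfrac : (q-1) * (C * β ^ (-q) / q) ≤ 1/2 := by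
    have h0 : (q-1) * (C * β ^ (-q) / q) = ((q-1) * C * β ^ (-q)) / q := by ring
    rw [h0, div_le_iff₀ hq0]
    linarith
  have hsum2 : Wq ≤ (k:ℝ) * A ^ q + (1/2) * Wq := by
    have h3 : (q-1) * ∫ t in A..M, F t ≤ (q-1) * (C * β ^ (-q) / q * Wq) := by
      apply mul_le_mul_of_nonneg_left (step3.trans step4) (by linarith)
    have h4 : (q-1) * (C * β ^ (-q) / q * Wq) ≤ (1/2) * Wq := by
      rw [← mul_assoc]
      exact mul_le_mul_of_nonneg_right hfrac hWq0
    linarith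
  have hfinal : (k:ℝ)⁻¹ * Wq ≤ 2 * A ^ q := by
    have h5 : Wq ≤ 2 * ((k:ℝ) * A ^ q) := by linarith
    calc (k:ℝ)⁻¹ * Wq ≤ (k:ℝ)⁻¹ * (2 * ((k:ℝ) * A ^ q)) :=
        mul_le_mul_of_nonneg_left h5 (inv_pos.2 hk0).le
      _ = 2 * A ^ q := by field_simp
  -- take q-th roots
  have hL : ((k:ℝ)⁻¹ * Wq) ^ (1/q) ≤ (2 * A ^ q) ^ (1/q) :=
    Real.rpow_le_rpow (by positivity) hfinal (by positivity)
  have hR : (2 * A ^ q) ^ (1/q) = 2 ^ (1/q) * A := by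
    rw [Real.mul_rpow (by norm_num) (Real.rpow_nonneg hApos.le q)]
    congr 1
    rw [← Real.rpow_mul hApos.le, mul_one_div_cancel hq0.ne', Real.rpow_one]
  have h2q : (2:ℝ) ^ (1/q) ≤ 2 := by
    nth_rewrite 2 [← Real.rpow_one 2]
    apply Real.rpow_le_rpow_of_exponent_le one_le_two
    rw [div_le_one hq0]
    linarith
  calc ((k:ℝ)⁻¹ * Wq) ^ (1/q) ≤ 2 ^ (1/q) * A := by rw [← hR]; exact hL
    _ ≤ 2 * A := mul_le_mul_of_nonneg_right h2q hApos.le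

theorem stmt3 {X : Type*} [MeasurableSpace X] (μ : Measure X)
    [IsProbabilityMeasure μ] [NullSingletonClass μ] (hcomp : μ.IsComplete)
    (T : X → X) (hTbij : Function.Bijective T) (hTerg : Ergodic T μ)
    (ω : X → ℝ) (hω : Measurable ω) (hωpos : ∀ x, 0 < ω x)
    (h : MemAlam μ T ω) :
    ∃ C q : ℝ, 1 < C ∧ 1 < q ∧ MemRH μ T ω C q := by
  obtain ⟨C, β, hC, hβ, hae⟩ := h
  set b : ℝ := min β 1 with hb
  have hb0 : 0 < b := lt_min hβ one_pos
  have hb1 : b ≤ 1 := min_le_right _ _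
  set δ : ℝ := min 1 (b ^ (2:ℝ) / (2 * C)) with hδ
  have hδ0 : 0 < δ := lt_min one_pos (by positivity)
  have hδ1 : δ ≤ 1 := min_le_left _ _
  have hq1 : 1 < 1 + δ := by linarith
  refine ⟨2, 1 + δ, one_lt_two, hq1, ?_⟩
  have hb2 : 0 < b ^ (2:ℝ) := Real.rpow_pos_of_pos hb0 _
  have hsmall : ((1 + δ) - 1) * C * β ^ (-(1 + δ)) ≤ (1 + δ) / 2 := by
    have h1 : β ^ (-(1+δ)) ≤ b ^ (-(1+δ)) := by
      rw [Real.rpow_neg hβ.le, Real.rpow_neg hb0.le]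
      apply inv_anti₀ (Real.rpow_pos_of_pos hb0 _)
      exact Real.rpow_le_rpow hb0.le (min_le_left β 1) (by linarith)
    have h2 : b ^ (-(1+δ)) ≤ (b ^ (2:ℝ))⁻¹ := by
      rw [Real.rpow_neg hb0.le]
      apply inv_anti₀ (Real.rpow_pos_of_pos hb0 _)
      exact Real.rpow_le_rpow_of_exponent_ge hb0 hb1 (by linarith)
    have h3 : δ * C * (b ^ (2:ℝ))⁻¹ ≤ 1/2 := by
      have hle : δ ≤ b ^ (2:ℝ) / (2 * C) := min_le_right _ _
      calc δ * C * (b ^ (2:ℝ))⁻¹ ≤ (b ^ (2:ℝ) / (2 * C)) * C * (b ^ (2:ℝ))⁻¹ := by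
            apply mul_le_mul_of_nonneg_right (mul_le_mul_of_nonneg_right hle hC.le)
              (by positivity)
        _ = 1/2 := by
            field_simp
    have hβn : 0 ≤ β ^ (-(1+δ)) := Real.rpow_nonneg hβ.le _
    have hbn : 0 ≤ b ^ (-(1+δ)) := Real.rpow_nonneg hb0.le _
    have c1 : δ * C * β ^ (-(1+δ)) ≤ δ * C * b ^ (-(1+δ)) :=
      mul_le_mul_of_nonneg_left h1 (by positivity)
    have c2 : δ * C * b ^ (-(1+δ)) ≤ δ * C * (b ^ (2:ℝ))⁻¹ :=
      mul_le_mul_of_nonneg_left h2 (by positivity)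
    have : ((1 + δ) - 1) = δ := by ring
    rw [this]
    linarith
  filter_upwards [hae] with x hx k hk
  exact key_s3 hC hβ hq1 hsmall hk (fun i => ω (T^[i] x)) (fun i => hωpos _)
    (fun lam hlam => hx k hk lam hlam)
end

section
/- Let ω be a weight. If there exist C, q > 1 such that ω ∈ RH_q, then ω ∈ A^CF_∞. -/
open MeasureTheory Finset

/-- `ω ∈ A^CF_∞`. -/
def MemACF {X : Type*} [MeasurableSpace X] (μ : Measure X) (T : X → X) (ω : X → ℝ) : Prop :=
  ∃ C ε : ℝ, 1 < C ∧ 0 < ε ∧ ε < 1 ∧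
    ∀ᵐ x ∂μ, ∀ k : ℕ, 0 < k → ∀ A ⊆ Finset.range k,
      (∑ i ∈ A, ω (T^[i] x)) / (∑ i ∈ Finset.range k, ω (T^[i] x)) ≤
        C * ((A.card : ℝ) / k) ^ ε

theorem stmt4 {X : Type*} [MeasurableSpace X] (μ : Measure X)
    [IsProbabilityMeasure μ] [NullSingletonClass μ] (hcomp : μ.IsComplete)
    (T : X → X) (hTbij : Function.Bijective T) (hTerg : Ergodic T μ)
    (ω : X → ℝ) (hω : Measurable ω) (hωpos : ∀ x, 0 < ω x)
    (h : ∃ C q : ℝ, 1 < C ∧ 1 < q ∧ MemRH μ T ω C q) :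
    MemACF μ T ω := by
  unfold MemRH at h
  unfold MemACF
  obtain ⟨C, q, hC, hq, hRH⟩ := h
  have hq0 : (0:ℝ) < q := lt_trans one_pos hq
  set ε : ℝ := 1 - 1/q with hε
  have hε0 : 0 < ε := by
    have : 1/q < 1 := by rw [div_lt_one hq0]; exact hq
    simpa [hε] using this
  have hε1 : ε < 1 := by
    have : 0 < 1/q := by positivity
    simp only [hε]; linarith
  set p : ℝ := ε⁻¹ with hp
  have hpq : p.HolderConjugate q := by
    refine Real.holderConjugate_iff.mpr ⟨?_, ?_⟩
    · rw [hp]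
      rw [one_lt_inv_iff₀]
      exact ⟨hε0, hε1⟩
    · rw [hp, inv_inv, hε, one_div]
      ring
  have h1p : 1 / p = ε := by rw [hp, one_div, inv_inv]
  refine ⟨C, ε, hC, hε0, hε1, ?_⟩
  filter_upwards [hRH] with x hx k hk A hA
  set f : ℕ → ℝ := fun i => ω (T^[i] x) with hf
  have hfpos : ∀ i, 0 < f i := fun i => hωpos _
  have hS : 0 < ∑ i ∈ Finset.range k, f i :=
    Finset.sum_pos (fun i _ => hfpos i) (by simpa using hk.ne')
  have hk0 : (0:ℝ) < (k:ℝ) := by exact_mod_cast hk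
  -- Hölder
  have holder : ∑ i ∈ A, f i ≤ (A.card : ℝ) ^ ε * (∑ i ∈ A, f i ^ q) ^ (1/q) := by
    have := Real.inner_le_Lp_mul_Lq_of_nonneg (s := A) (f := fun _ => (1:ℝ)) (g := f) hpq
      (fun i _ => zero_le_one) (fun i _ => (hfpos i).le)
    simpa [Real.one_rpow, h1p, Real.rpow_natCast] using this
  have hmono : (∑ i ∈ A, f i ^ q) ^ (1/q) ≤ (∑ i ∈ Finset.range k, f i ^ q) ^ (1/q) := by
    apply Real.rpow_le_rpow (Finset.sum_nonneg fun i _ => (Real.rpow_nonneg (hfpos i).le q))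
      (Finset.sum_le_sum_of_subset_of_nonneg hA fun i _ _ => Real.rpow_nonneg (hfpos i).le q)
      (div_nonneg zero_le_one hq0.le)
  have hRHk := hx k hk
  -- (∑ f^q)^(1/q) ≤ C * k^(1/q - 1) * ∑ f
  have key : (∑ i ∈ Finset.range k, f i ^ q) ^ (1/q) ≤
      C * (k:ℝ) ^ (1/q - 1) * ∑ i ∈ Finset.range k, f i := by
    have heq : (∑ i ∈ Finset.range k, f i ^ q) ^ (1/q) =
        (k:ℝ) ^ (1/q) * ((k:ℝ)⁻¹ * ∑ i ∈ Finset.range k, f i ^ q) ^ (1/q) := by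
      rw [← Real.mul_rpow hk0.le (mul_nonneg (inv_nonneg.2 hk0.le)
        (Finset.sum_nonneg fun i _ => Real.rpow_nonneg (hfpos i).le q)), ← mul_assoc, mul_inv_cancel₀ hk0.ne', one_mul]
    rw [heq]
    calc (k:ℝ) ^ (1/q) * ((k:ℝ)⁻¹ * ∑ i ∈ Finset.range k, f i ^ q) ^ (1/q)
        ≤ (k:ℝ) ^ (1/q) * (C * ((k:ℝ)⁻¹ * ∑ i ∈ Finset.range k, f i)) := by
          exact mul_le_mul_of_nonneg_left hRHk (Real.rpow_nonneg hk0.le _)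
      _ = C * (k:ℝ) ^ (1/q - 1) * ∑ i ∈ Finset.range k, f i := by
          rw [Real.rpow_sub hk0, Real.rpow_one]
          field_simp
  rw [div_le_iff₀ hS]
  calc ∑ i ∈ A, f i ≤ (A.card : ℝ) ^ ε * (∑ i ∈ Finset.range k, f i ^ q) ^ (1/q) :=
        holder.trans (mul_le_mul_of_nonneg_left hmono (Real.rpow_nonneg (Nat.cast_nonneg _) _))
    _ ≤ (A.card : ℝ) ^ ε * (C * (k:ℝ) ^ (1/q - 1) * ∑ i ∈ Finset.range k, f i) :=
        mul_le_mul_of_nonneg_left key (Real.rpow_nonneg (Nat.cast_nonneg _) _)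
    _ = C * ((A.card : ℝ) / k) ^ ε * ∑ i ∈ Finset.range k, f i := by
        rw [Real.div_rpow (Nat.cast_nonneg _) hk0.le]
        have : (k:ℝ) ^ (1/q - 1) = ((k:ℝ) ^ ε)⁻¹ := by
          rw [← Real.rpow_neg hk0.le, hε]; ring_nf
        rw [this]
        field_simp
end

section
/- Let ω be a weight. If ω ∈ Â^M_∞, then ω ∈ A^M_∞. -/
open MeasureTheory Finset

/-- `ω ∈ Â^M_∞`. -/
def MemAhatM {X : Type*} [MeasurableSpace X] (μ : Measure X) (T : X → X) (ω : X → ℝ) : Prop :=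
  ∃ α' β' : ℝ, 0 < α' ∧ α' < 1 ∧ 0 < β' ∧ β' < 1 ∧
    ∀ᵐ x ∂μ, ∀ k : ℕ, 0 < k → ∀ A ⊆ Finset.range k,
      (∑ i ∈ A, ω (T^[i] x)) ≤ α' * ∑ i ∈ Finset.range k, ω (T^[i] x) →
        (A.card : ℝ) ≤ β' * k

/-- `ω ∈ A^M_∞`. -/
def MemAM {X : Type*} [MeasurableSpace X] (μ : Measure X) (T : X → X) (ω : X → ℝ) : Prop :=
  ∃ α β : ℝ, 0 < α ∧ α < 1 ∧ 0 < β ∧ β < 1 ∧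
    ∀ᵐ x ∂μ, ∀ k : ℕ, 0 < k → ∀ A ⊆ Finset.range k,
      (A.card : ℝ) ≤ α * k →
        (∑ i ∈ A, ω (T^[i] x)) ≤ β * ∑ i ∈ Finset.range k, ω (T^[i] x)

theorem stmt6 {X : Type*} [MeasurableSpace X] (μ : Measure X)
    [IsProbabilityMeasure μ] [NullSingletonClass μ] (hcomp : μ.IsComplete)
    (T : X → X) (hTbij : Function.Bijective T) (hTerg : Ergodic T μ)
    (ω : X → ℝ) (hω : Measurable ω) (hωpos : ∀ x, 0 < ω x)
    (h : MemAhatM μ T ω) :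
    MemAM μ T ω := by
  obtain ⟨α', β', hα'0, hα'1, hβ'0, hβ'1, hae⟩ := h
  refine ⟨(1 - β') / 2, 1 - α', by linarith, by linarith, by linarith, by linarith, ?_⟩
  filter_upwards [hae] with x hx k hk A hA hcard
  set S := ∑ i ∈ Finset.range k, ω (T^[i] x) with hS
  have hsplit : S = (∑ i ∈ A, ω (T^[i] x)) + ∑ i ∈ Finset.range k \ A, ω (T^[i] x) := by
    rw [hS, ← Finset.sum_sdiff hA]; ring
  have hcardc : ((Finset.range k \ A).card : ℝ) = k - A.card := by
    rw [Finset.card_sdiff_of_subset hA, Finset.card_range]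
    have := Finset.card_le_card hA
    rw [Finset.card_range] at this
    push_cast [Nat.cast_sub this]
    ring
  have hbig : β' * k < ((Finset.range k \ A).card : ℝ) := by
    rw [hcardc]
    have hk' : (1 : ℝ) ≤ k := by exact_mod_cast hk
    nlinarith
  have := hx k hk (Finset.range k \ A) (Finset.sdiff_subset)
  have hgt : α' * S < ∑ i ∈ Finset.range k \ A, ω (T^[i] x) := by
    by_contra hle
    exact absurd (this (not_lt.mp hle)) (not_le.mpr hbig)
  linarith
end

section
/- Let ω be a weight. If ω ∈ A^M_∞, then ω ∈ A^avg_∞. -/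
open MeasureTheory Finset

theorem stmt7 {X : Type*} [MeasurableSpace X] (μ : Measure X)
    [IsProbabilityMeasure μ] [NullSingletonClass μ] (hcomp : μ.IsComplete)
    (T : X → X) (hTbij : Function.Bijective T) (hTerg : Ergodic T μ)
    (ω : X → ℝ) (hω : Measurable ω) (hωpos : ∀ x, 0 < ω x)
    (h : MemAM μ T ω) :
    MemAavg μ T ω := by
  obtain ⟨α, β, hα0, hα1, hβ0, hβ1, hae⟩ := h
  refine ⟨(1-β)/2, 1-α, by linarith, by linarith, by linarith, by linarith, ?_⟩
  filter_upwards [hae] with x hx k hk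
  by_contra hcon
  push_neg at hcon
  set γ : ℝ := (1-β)/2 with hγ
  set S := (Finset.range k).filter fun j => ω (T^[j] x) ≤ γ * ergAvg T ω k x with hSdef
  set B := (Finset.range k).filter fun j => ¬ (ω (T^[j] x) ≤ γ * ergAvg T ω k x) with hBdef
  have hkpos : (0:ℝ) < k := Nat.cast_pos.mpr hk
  have hcards : S.card + B.card = k := by
    rw [hSdef, hBdef, Finset.card_filter_add_card_filter_not, card_range]
  have hSk : S.card ≤ k := by omega
  have hScard : (1-α) * k < (S.card : ℝ) := (lt_div_iff₀ hkpos).mp hcon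
  have hBcard : (B.card : ℝ) ≤ α * k := by
    have : (B.card : ℝ) = k - S.card := by
      have := hcards; push_cast [← this]; ring
    linarith
  have hBW := hx k hk B (Finset.filter_subset _ _) hBcard
  set W := ∑ i ∈ Finset.range k, ω (T^[i] x) with hWdef
  have hWpos : 0 < W :=
    Finset.sum_pos (fun i _ => hωpos _) (Finset.nonempty_range_iff.mpr hk.ne')
  have hsplit : (∑ i ∈ S, ω (T^[i] x)) + ∑ i ∈ B, ω (T^[i] x) = W :=
    Finset.sum_filter_add_sum_filter_not _ _ _
  have hSsum : (∑ i ∈ S, ω (T^[i] x)) ≤ (S.card : ℝ) * (γ * ((k:ℝ)⁻¹ * W)) := by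
    have := Finset.sum_le_card_nsmul S (fun i => ω (T^[i] x)) (γ * ((k:ℝ)⁻¹ * W))
      (fun i hi => by
        have := (Finset.mem_filter.mp hi).2
        simpa [ergAvg, hWdef] using this)
    simpa [nsmul_eq_mul] using this
  have hinv : (k:ℝ)⁻¹ * (k:ℝ) = 1 := inv_mul_cancel₀ hkpos.ne'
  have hSle : (∑ i ∈ S, ω (T^[i] x)) ≤ γ * W := by
    have h1 : (S.card : ℝ) ≤ (k:ℝ) := Nat.cast_le.mpr hSk
    have hγpos : 0 < γ := by rw [hγ]; linarith
    have h2 : 0 ≤ γ * ((k:ℝ)⁻¹ * W) :=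
      mul_nonneg hγpos.le (mul_nonneg (by positivity) hWpos.le)
    calc (∑ i ∈ S, ω (T^[i] x)) ≤ (S.card : ℝ) * (γ * ((k:ℝ)⁻¹ * W)) := hSsum
      _ ≤ (k:ℝ) * (γ * ((k:ℝ)⁻¹ * W)) := by nlinarith
      _ = γ * W := by field_simp
  nlinarith [hSle, hBW, hsplit, hWpos]
end

section
/- Let ω be a weight. If there exist C, q > 1 such that ω ∈ RH_q, then ω ∈ A^log_∞. -/
open MeasureTheory Finset

/-- `ω ∈ A^log_∞`. -/
def MemAlog {X : Type*} [MeasurableSpace X] (μ : Measure X) (T : X → X) (ω : X → ℝ) : Prop :=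
  ∃ C : ℝ, 1 < C ∧
    ∀ᵐ x ∂μ, ∀ k : ℕ, 0 < k →
      (k : ℝ)⁻¹ * ∑ j ∈ Finset.range k,
        (ω (T^[j] x) / ergAvg T ω k x) * max (Real.log (ω (T^[j] x) / ergAvg T ω k x)) 0 ≤ C

lemma key_log_ineq (q : ℝ) (hq : 1 < q) (t : ℝ) (ht : 0 < t) :
    t * max (Real.log t) 0 ≤ t ^ q / (q - 1) := by
  have hq1 : 0 < q - 1 := by linarith
  rcases le_or_gt t 1 with h1 | h1
  · rw [max_eq_right (Real.log_nonpos ht.le h1)]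
    have : 0 ≤ t ^ q / (q - 1) := by positivity
    simpa using this
  · have hlog0 : 0 ≤ Real.log t := Real.log_nonneg h1.le
    rw [max_eq_left hlog0]
    have hlog : Real.log t ≤ t ^ (q - 1) / (q - 1) := by
      have h2 : Real.log (t ^ (q - 1)) ≤ t ^ (q - 1) - 1 :=
        Real.log_le_sub_one_of_pos (Real.rpow_pos_of_pos ht _)
      rw [Real.log_rpow ht] at h2
      rw [le_div_iff₀ hq1]
      nlinarith [Real.rpow_pos_of_pos ht (q - 1)]
    have := mul_le_mul_of_nonneg_left hlog ht.le
    calc t * Real.log t ≤ t * (t ^ (q - 1) / (q - 1)) := this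
      _ = (t ^ (1 : ℝ) * t ^ (q - 1)) / (q - 1) := by rw [Real.rpow_one]; ring
      _ = t ^ q / (q - 1) := by rw [← Real.rpow_add ht]; ring_nf

theorem stmt8 {X : Type*} [MeasurableSpace X] (μ : Measure X)
    [IsProbabilityMeasure μ] [NullSingletonClass μ] (hcomp : μ.IsComplete)
    (T : X → X) (hTbij : Function.Bijective T) (hTerg : Ergodic T μ)
    (ω : X → ℝ) (hω : Measurable ω) (hωpos : ∀ x, 0 < ω x)
    (h : ∃ C q : ℝ, 1 < C ∧ 1 < q ∧ MemRH μ T ω C q) :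
    MemAlog μ T ω := by
  obtain ⟨C, q, hC, hq, hRH⟩ := h
  have hq1 : 0 < q - 1 := by linarith
  have hCq : 0 < C ^ q / (q - 1) := by positivity
  refine ⟨C ^ q / (q - 1) + 1, by linarith, ?_⟩
  filter_upwards [hRH] with x hx k hk
  set A := ergAvg T ω k x with hA
  have hkpos : (0 : ℝ) < (k : ℝ) := by exact_mod_cast hk
  have hApos : 0 < A := by
    rw [hA, ergAvg]
    apply mul_pos (by positivity)
    apply Finset.sum_pos (fun i _ => hωpos _) ⟨0, Finset.mem_range.mpr hk⟩
  have hRHk := hx k hk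
  -- from RH, get sum of rpow bound
  have hSnn : 0 ≤ (k : ℝ)⁻¹ * ∑ i ∈ Finset.range k, ω (T^[i] x) ^ q := by
    apply mul_nonneg (by positivity)
    exact Finset.sum_nonneg fun i _ => Real.rpow_nonneg (hωpos _).le _
  have hCA : 0 ≤ C * A := by positivity
  have hSq : (k : ℝ)⁻¹ * ∑ i ∈ Finset.range k, ω (T^[i] x) ^ q ≤ (C * A) ^ q := by
    have h1 : (((k : ℝ)⁻¹ * ∑ i ∈ Finset.range k, ω (T^[i] x) ^ q) ^ (1 / q)) ^ q
        ≤ (C * A) ^ q := by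
      apply Real.rpow_le_rpow (Real.rpow_nonneg hSnn _) _ (by positivity)
      simpa [hA, ergAvg] using hRHk
    rwa [← Real.rpow_mul hSnn, one_div,
      inv_mul_cancel₀ (by positivity : q ≠ 0), Real.rpow_one] at h1
  have hterm : ∀ j ∈ Finset.range k,
      (ω (T^[j] x) / A) * max (Real.log (ω (T^[j] x) / A)) 0
        ≤ (ω (T^[j] x) ^ q / A ^ q) / (q - 1) := fun j _ => by
    have h2 := key_log_ineq q hq (ω (T^[j] x) / A) (div_pos (hωpos _) hApos)
    rwa [Real.div_rpow (hωpos _).le hApos.le] at h2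
  have hsum := Finset.sum_le_sum hterm
  have hC0 : (0 : ℝ) < C := lt_trans one_pos hC
  calc (k : ℝ)⁻¹ * ∑ j ∈ Finset.range k,
        (ω (T^[j] x) / A) * max (Real.log (ω (T^[j] x) / A)) 0
      ≤ (k : ℝ)⁻¹ * ∑ j ∈ Finset.range k, (ω (T^[j] x) ^ q / A ^ q) / (q - 1) :=
        mul_le_mul_of_nonneg_left hsum (by positivity)
    _ = ((k : ℝ)⁻¹ * ∑ j ∈ Finset.range k, ω (T^[j] x) ^ q) / A ^ q / (q - 1) := by
        rw [← Finset.sum_div, ← Finset.sum_div]; ring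
    _ ≤ (C * A) ^ q / A ^ q / (q - 1) := by gcongr
    _ = C ^ q / (q - 1) := by
        rw [Real.mul_rpow hC0.le hApos.le]
        have : (0:ℝ) < A ^ q := Real.rpow_pos_of_pos hApos q
        field_simp
    _ ≤ C ^ q / (q - 1) + 1 := by linarith
end

section
/- Let ω be a weight. If ω ∈ A^log_∞, then ω ∈ A^M_∞. -/
open MeasureTheory Finset

theorem stmt9 {X : Type*} [MeasurableSpace X] (μ : Measure X)
    [IsProbabilityMeasure μ] [NullSingletonClass μ] (hcomp : μ.IsComplete)
    (T : X → X) (hTbij : Function.Bijective T) (hTerg : Ergodic T μ)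
    (ω : X → ℝ) (hω : Measurable ω) (hωpos : ∀ x, 0 < ω x)
    (h : MemAlog μ T ω) :
    MemAM μ T ω := by
  obtain ⟨C, hC1, hae⟩ := h
  set E := Real.exp (2 * C) with hE
  have hEpos : 0 < E := Real.exp_pos _
  have hE1 : (1 : ℝ) < E := by
    have := Real.add_one_le_exp (2 * C)
    nlinarith
  refine ⟨(4 * E)⁻¹, 3 / 4, by positivity, ?_, by norm_num, by norm_num, ?_⟩
  · have h4E : (1 : ℝ) < 4 * E := by nlinarith
    exact inv_lt_one_of_one_lt₀ h4E
  · filter_upwards [hae] with x hx k hk A hA hcard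
    set a := ergAvg T ω k x with ha
    have hk' : (0 : ℝ) < k := Nat.cast_pos.mpr hk
    have hSpos : 0 < ∑ i ∈ Finset.range k, ω (T^[i] x) :=
      Finset.sum_pos (fun i _ => hωpos _) (Finset.nonempty_range_iff.mpr hk.ne')
    have hapos : 0 < a := by
      rw [ha, ergAvg]
      exact mul_pos (inv_pos.mpr hk') hSpos
    have hC0 : (0 : ℝ) < 2 * C := by linarith
    set f : ℕ → ℝ := fun j => (ω (T^[j] x) / a) * max (Real.log (ω (T^[j] x) / a)) 0 with hf
    have hfnn : ∀ i, 0 ≤ f i := fun i =>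
      mul_nonneg (div_pos (hωpos _) hapos).le (le_max_right _ _)
    have hptw : ∀ i, ω (T^[i] x) ≤ E * a + a / (2 * C) * f i := by
      intro i
      have hwpos : 0 < ω (T^[i] x) := hωpos _
      by_cases hcase : ω (T^[i] x) ≤ E * a
      · have : 0 ≤ a / (2 * C) * f i := mul_nonneg (by positivity) (hfnn i)
        linarith
      · push_neg at hcase
        have ht : E < ω (T^[i] x) / a := by
          rw [lt_div_iff₀ hapos]; linarith
        have htpos : 0 < ω (T^[i] x) / a := div_pos hwpos hapos
        have hlog : 2 * C < Real.log (ω (T^[i] x) / a) :=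
          (Real.lt_log_iff_exp_lt htpos).mpr ht
        have hmax : max (Real.log (ω (T^[i] x) / a)) 0 = Real.log (ω (T^[i] x) / a) :=
          max_eq_left (by linarith)
        have heq : a / (2 * C) * f i = ω (T^[i] x) * (Real.log (ω (T^[i] x) / a) / (2 * C)) := by
          rw [hf]; simp only [hmax]; field_simp
        rw [heq]
        have h1 : 1 ≤ Real.log (ω (T^[i] x) / a) / (2 * C) := (one_le_div hC0).mpr hlog.le
        nlinarith [mul_pos hEpos hapos]
    have hsum1 : ∑ i ∈ A, ω (T^[i] x) ≤ ∑ i ∈ A, (E * a + a / (2 * C) * f i) :=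
      Finset.sum_le_sum fun i _ => hptw i
    have hsum1' : ∑ i ∈ A, (E * a + a / (2 * C) * f i)
        = (A.card : ℝ) * (E * a) + a / (2 * C) * ∑ i ∈ A, f i := by
      rw [Finset.sum_add_distrib, Finset.sum_const, ← Finset.mul_sum, nsmul_eq_mul]
    have hsum2 : ∑ i ∈ A, f i ≤ ∑ i ∈ Finset.range k, f i :=
      Finset.sum_le_sum_of_subset_of_nonneg hA fun i _ _ => hfnn i
    have hsum3 : ∑ i ∈ Finset.range k, f i ≤ C * k := by
      have hxk := hx k hk
      rw [inv_mul_le_iff₀ hk'] at hxk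
      linarith [hxk]
    have haS : a * k = ∑ i ∈ Finset.range k, ω (T^[i] x) := by
      rw [ha, ergAvg]; field_simp
    have hcard' : (A.card : ℝ) * (E * a) ≤ ((4 * E)⁻¹ * k) * (E * a) :=
      mul_le_mul_of_nonneg_right hcard (mul_pos hEpos hapos).le
    have hEq : (4 * E)⁻¹ * k * (E * a) = a * k / 4 := by
      field_simp
    have hterm2 : a / (2 * C) * ∑ i ∈ A, f i ≤ a * k / 2 := by
      have h2 : a / (2 * C) * ∑ i ∈ A, f i ≤ a / (2 * C) * (C * k) := by
        apply mul_le_mul_of_nonneg_left _ (by positivity)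
        linarith
      have h3 : a / (2 * C) * (C * k) = a * k / 2 := by
        field_simp
      linarith
    calc ∑ i ∈ A, ω (T^[i] x)
        ≤ (A.card : ℝ) * (E * a) + a / (2 * C) * ∑ i ∈ A, f i := by
          rw [← hsum1']; exact hsum1
      _ ≤ a * k / 4 + a * k / 2 := by
          rw [← hEq]; exact add_le_add hcard' hterm2
      _ = 3 / 4 * (a * k) := by ring
      _ = 3 / 4 * ∑ i ∈ Finset.range k, ω (T^[i] x) := by rw [haS]
end

section
/- Let g and ω be weights and suppose g satisfies the doubling condition. If ω ∈ A^avg_∞(g), then ω ∈ A^λ_∞(g). -/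
open MeasureTheory Finset

/-- The weighted ergodic average `T^g_{0,k-1}ω(x)`. -/
noncomputable def ergAvgW {X : Type*} (T : X → X) (g ω : X → ℝ) (k : ℕ) (x : X) : ℝ :=
  (∑ i ∈ Finset.range k, g (T^[i] x))⁻¹ *
    ∑ i ∈ Finset.range k, ω (T^[i] x) * g (T^[i] x)

/-- `g` satisfies the doubling condition. -/
def Doubling {X : Type*} [MeasurableSpace X] (μ : Measure X) (T : X → X) (g : X → ℝ) : Prop :=
  ∃ C : ℝ, ∀ᵐ x ∂μ, ∀ k : ℕ, 2 ≤ k →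
    ((∑ j ∈ Finset.range ((k - 1) / 2 + 1), g (T^[j] x))⁻¹ *
        ∑ j ∈ Finset.range k, g (T^[j] x) ≤ C) ∧
    ((∑ j ∈ Finset.Ico ((k - 1) / 2 + 1) k, g (T^[j] x))⁻¹ *
        ∑ j ∈ Finset.range k, g (T^[j] x) ≤ C)

/-- `ω ∈ A^avg_∞(g)`. -/
def MemAavgW {X : Type*} [MeasurableSpace X] (μ : Measure X) (T : X → X) (g ω : X → ℝ) : Prop :=
  ∃ γ δ : ℝ, 0 < γ ∧ γ < 1 ∧ 0 < δ ∧ δ < 1 ∧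
    ∀ᵐ x ∂μ, ∀ k : ℕ, 0 < k →
      (∑ i ∈ Finset.range k, g (T^[i] x))⁻¹ *
        (∑ j ∈ (Finset.range k).filter (fun j => ω (T^[j] x) ≤ γ * ergAvgW T g ω k x),
          g (T^[j] x)) ≤ δ

/-- `ω ∈ A^λ_∞(g)`. -/
def MemAlamW {X : Type*} [MeasurableSpace X] (μ : Measure X) (T : X → X) (g ω : X → ℝ) : Prop :=
  ∃ C β : ℝ, 0 < C ∧ 0 < β ∧
    ∀ᵐ x ∂μ, ∀ k : ℕ, 0 < k → ∀ lam : ℝ, ergAvgW T g ω k x < lam →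
      ∑ i ∈ (Finset.range k).filter (fun i => lam < ω (T^[i] x)),
          ω (T^[i] x) * g (T^[i] x) ≤
        C * lam * ∑ i ∈ (Finset.range k).filter (fun i => β * lam < ω (T^[i] x)), g (T^[i] x)

private lemma aux_stop (G W : ℕ → ℝ) (hG : ∀ i, 0 < G i) (hW : ∀ i, 0 < W i)
    {γ δ : ℝ} (hγ0 : 0 < γ) (hδ1 : δ < 1)
    (hA : ∀ a b : ℕ, a < b →
      (∑ j ∈ (Ico a b).filter
          (fun j => W j ≤ γ * ((∑ i ∈ Ico a b, G i)⁻¹ * ∑ i ∈ Ico a b, W i * G i)), G j)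
        ≤ δ * ∑ i ∈ Ico a b, G i)
    (c d : ℕ) (hcd : c < d) (lam B : ℝ)
    (hstop : lam * ∑ j ∈ Ico c d, G j < ∑ j ∈ Ico c d, W j * G j)
    (hB : ∑ j ∈ Ico c d, W j * G j ≤ B * ∑ j ∈ Ico c d, G j) :
    ∑ i ∈ (Ico c d).filter (fun i => lam < W i), W i * G i ≤
      (B / (1 - δ)) * ∑ i ∈ (Ico c d).filter (fun i => γ * lam < W i), G i := by
  have hSpos : 0 < ∑ i ∈ Ico c d, G i :=
    Finset.sum_pos (fun i _ => hG i) (by simp [hcd])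
  have hVpos : 0 < ∑ i ∈ Ico c d, W i * G i :=
    Finset.sum_pos (fun i _ => mul_pos (hW i) (hG i)) (by simp [hcd])
  set S := ∑ i ∈ Ico c d, G i with hS
  set V := ∑ i ∈ Ico c d, W i * G i with hV
  have hBpos : 0 < B := by nlinarith
  have havg : lam < S⁻¹ * V := by
    rw [inv_mul_eq_div, lt_div_iff₀ hSpos]; linarith [hstop]
  have hsplit := Finset.sum_filter_add_sum_filter_not (Ico c d)
    (fun j => W j ≤ γ * (S⁻¹ * V)) G
  have hgood : (1 - δ) * S ≤
      ∑ j ∈ (Ico c d).filter (fun j => ¬ (W j ≤ γ * (S⁻¹ * V))), G j := by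
    have := hA c d hcd
    linarith [this, hsplit]
  have hsub : (Ico c d).filter (fun j => ¬ (W j ≤ γ * (S⁻¹ * V))) ⊆
      (Ico c d).filter (fun j => γ * lam < W j) := by
    intro j hj
    simp only [Finset.mem_filter, not_le] at hj ⊢
    exact ⟨hj.1, lt_trans (by nlinarith [hj.2]) hj.2⟩
  have h2 : (1 - δ) * S ≤ ∑ j ∈ (Ico c d).filter (fun j => γ * lam < W j), G j :=
    le_trans hgood (Finset.sum_le_sum_of_subset_of_nonneg hsub
      (fun i _ _ => (hG i).le))
  have hL : ∑ i ∈ (Ico c d).filter (fun i => lam < W i), W i * G i ≤ V :=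
    Finset.sum_le_sum_of_subset_of_nonneg (Finset.filter_subset _ _)
      (fun i _ _ => (mul_pos (hW i) (hG i)).le)
  rw [div_mul_eq_mul_div, le_div_iff₀ (by linarith : (0:ℝ) < 1 - δ)]
  nlinarith [h2, hL, hB, hBpos, hSpos]

private lemma aux_key (G W : ℕ → ℝ) (hG : ∀ i, 0 < G i) (hW : ∀ i, 0 < W i)
    {C γ δ : ℝ} (hC : 0 < C) (hγ0 : 0 < γ) (hδ1 : δ < 1)
    (hdb : ∀ a b : ℕ, a + 2 ≤ b →
      (∑ j ∈ Ico a b, G j) ≤ C * ∑ j ∈ Ico a (a + ((b - a - 1) / 2 + 1)), G j ∧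
      (∑ j ∈ Ico a b, G j) ≤ C * ∑ j ∈ Ico (a + ((b - a - 1) / 2 + 1)) b, G j)
    (hA : ∀ a b : ℕ, a < b →
      (∑ j ∈ (Ico a b).filter
          (fun j => W j ≤ γ * ((∑ i ∈ Ico a b, G i)⁻¹ * ∑ i ∈ Ico a b, W i * G i)), G j)
        ≤ δ * ∑ i ∈ Ico a b, G i) :
    ∀ n a b : ℕ, b - a ≤ n → a < b → ∀ lam : ℝ,
      (∑ i ∈ Ico a b, W i * G i) ≤ lam * ∑ i ∈ Ico a b, G i →
      ∑ i ∈ (Ico a b).filter (fun i => lam < W i), W i * G i ≤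
        (C / (1 - δ)) * lam * ∑ i ∈ (Ico a b).filter (fun i => γ * lam < W i), G i := by
  intro n
  induction n with
  | zero => intro a b h1 h2; omega
  | succ n ih =>
    intro a b hn hab lam hl
    have hSpos : 0 < ∑ i ∈ Ico a b, G i :=
      Finset.sum_pos (fun i _ => hG i) (by simp [hab])
    have hVpos : 0 < ∑ i ∈ Ico a b, W i * G i :=
      Finset.sum_pos (fun i _ => mul_pos (hW i) (hG i)) (by simp [hab])
    have hlam : 0 < lam := by nlinarith
    have hKpos : 0 < C / (1 - δ) := div_pos hC (by linarith)
    by_cases hb2 : a + 2 ≤ b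
    · set m := a + ((b - a - 1) / 2 + 1) with hm
      have ham : a < m := by omega
      have hmb : m < b := by omega
      have hfsplit : ∀ (p : ℕ → Prop) [DecidablePred p] (F : ℕ → ℝ),
          ∑ i ∈ (Ico a b).filter p, F i =
            ∑ i ∈ (Ico a m).filter p, F i + ∑ i ∈ (Ico m b).filter p, F i := by
        intro p _ F
        rw [← Finset.Ico_union_Ico_eq_Ico ham.le hmb.le, Finset.filter_union,
          Finset.sum_union (Finset.disjoint_filter_filter
            (Finset.Ico_disjoint_Ico_consecutive a m b))]
      have child : ∀ c d : ℕ, c < d → Ico c d ⊆ Ico a b →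
          (∑ i ∈ Ico a b, G i) ≤ C * ∑ i ∈ Ico c d, G i → d - c ≤ n →
          ∑ i ∈ (Ico c d).filter (fun i => lam < W i), W i * G i ≤
            (C / (1 - δ)) * lam * ∑ i ∈ (Ico c d).filter (fun i => γ * lam < W i), G i := by
        intro c d hcd hsub hdb' hlen
        by_cases hst : ∑ i ∈ Ico c d, W i * G i ≤ lam * ∑ i ∈ Ico c d, G i
        · exact ih c d hlen hcd lam hst
        · push_neg at hst
          have hVsub : ∑ i ∈ Ico c d, W i * G i ≤ ∑ i ∈ Ico a b, W i * G i :=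
            Finset.sum_le_sum_of_subset_of_nonneg hsub
              (fun i _ _ => (mul_pos (hW i) (hG i)).le)
          have hB : ∑ j ∈ Ico c d, W j * G j ≤ (C * lam) * ∑ j ∈ Ico c d, G j := by
            nlinarith [hVsub, hl, hdb']
          have hres := aux_stop G W hG hW hγ0 hδ1 hA c d hcd lam (C * lam) hst hB
          have heq : (C * lam) / (1 - δ) *
              (∑ i ∈ (Ico c d).filter (fun i => γ * lam < W i), G i) =
              (C / (1 - δ)) * lam *
              (∑ i ∈ (Ico c d).filter (fun i => γ * lam < W i), G i) := by ring
          linarith [hres, heq.le]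
      have h1 := child a m ham (Finset.Ico_subset_Ico le_rfl hmb.le) (hdb a b hb2).1
        (by omega)
      have h2 := child m b hmb (Finset.Ico_subset_Ico ham.le le_rfl) (hdb a b hb2).2
        (by omega)
      rw [hfsplit (fun i => lam < W i) (fun i => W i * G i),
        hfsplit (fun i => γ * lam < W i) G, mul_add]
      exact add_le_add h1 h2
    · have hb1 : b = a + 1 := by omega
      subst hb1
      have hIab : Ico a (a + 1) = {a} := Nat.Ico_succ_singleton a
      rw [hIab] at hl ⊢
      simp only [Finset.sum_singleton] at hl
      have hWa : ¬ (lam < W a) := by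
        have := hG a
        nlinarith
      rw [Finset.filter_singleton]
      simp only [hWa, if_false, Finset.sum_empty]
      exact mul_nonneg (mul_nonneg hKpos.le hlam.le)
        (Finset.sum_nonneg fun i _ => (hG i).le)

theorem stmt10 {X : Type*} [MeasurableSpace X] (μ : Measure X)
    [IsProbabilityMeasure μ] [NullSingletonClass μ] (hcomp : μ.IsComplete)
    (T : X → X) (hTbij : Function.Bijective T) (hTerg : Ergodic T μ)
    (g ω : X → ℝ) (hg : Measurable g) (hgpos : ∀ x, 0 < g x)
    (hω : Measurable ω) (hωpos : ∀ x, 0 < ω x)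
    (hgd : Doubling μ T g) (h : MemAavgW μ T g ω) :
    MemAlamW μ T g ω := by
  obtain ⟨C0, hdbae⟩ := hgd
  obtain ⟨γ, δ, hγ0, hγ1, hδ0, hδ1, hAae⟩ := h
  have hmp : MeasurePreserving T μ μ := hTerg.toMeasurePreserving
  have hdball := ae_all_iff.2
    (fun a : ℕ => (hmp.iterate a).quasiMeasurePreserving.ae hdbae)
  have hAall := ae_all_iff.2
    (fun a : ℕ => (hmp.iterate a).quasiMeasurePreserving.ae hAae)
  have hC : (0:ℝ) < max C0 1 := lt_of_lt_of_le one_pos (le_max_right _ _)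
  refine ⟨max C0 1 / (1 - δ), γ, div_pos hC (by linarith), hγ0, ?_⟩
  filter_upwards [hdball, hAall] with x hdbx hAx
  intro k hk lam hlam
  -- shifting lemmas
  have hshift : ∀ (F : X → ℝ) (a c d : ℕ),
      ∑ j ∈ Finset.Ico c d, F (T^[j] (T^[a] x)) =
        ∑ j ∈ Finset.Ico (a + c) (a + d), F (T^[j] x) := by
    intro F a c d
    rw [Finset.sum_Ico_eq_sum_range, Finset.sum_Ico_eq_sum_range,
      show a + d - (a + c) = d - c by omega]
    refine Finset.sum_congr rfl fun i _ => ?_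
    rw [← Function.iterate_add_apply, show c + i + a = a + (c + i) by omega,
      Function.iterate_add_apply, ← Function.iterate_add_apply,
      show a + (c + i) = a + c + i by omega]
  have hshift0 : ∀ (F : X → ℝ) (a m : ℕ),
      ∑ j ∈ Finset.range m, F (T^[j] (T^[a] x)) =
        ∑ j ∈ Finset.Ico a (a + m), F (T^[j] x) := by
    intro F a m
    rw [Finset.range_eq_Ico]
    simpa using hshift F a 0 m
  -- doubling in interval form
  have hdb' : ∀ a b : ℕ, a + 2 ≤ b →
      (∑ j ∈ Finset.Ico a b, g (T^[j] x)) ≤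
        (max C0 1) * ∑ j ∈ Finset.Ico a (a + ((b - a - 1) / 2 + 1)), g (T^[j] x) ∧
      (∑ j ∈ Finset.Ico a b, g (T^[j] x)) ≤
        (max C0 1) * ∑ j ∈ Finset.Ico (a + ((b - a - 1) / 2 + 1)) b, g (T^[j] x) := by
    intro a b hab
    obtain ⟨hL, hR⟩ := hdbx a (b - a) (by omega)
    rw [hshift0 g a ((b - a - 1) / 2 + 1), hshift0 g a (b - a),
      show a + (b - a) = b by omega] at hL
    rw [hshift g a ((b - a - 1) / 2 + 1) (b - a), hshift0 g a (b - a),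
      show a + (b - a) = b by omega] at hR
    have hP1 : 0 < ∑ j ∈ Finset.Ico a (a + ((b - a - 1) / 2 + 1)), g (T^[j] x) :=
      Finset.sum_pos (fun i _ => hgpos _) (Finset.nonempty_Ico.2 (by omega))
    have hP2 : 0 < ∑ j ∈ Finset.Ico (a + ((b - a - 1) / 2 + 1)) b, g (T^[j] x) :=
      Finset.sum_pos (fun i _ => hgpos _) (Finset.nonempty_Ico.2 (by omega))
    have h1 := (inv_mul_le_iff₀ hP1).1 hL
    have h2 := (inv_mul_le_iff₀ hP2).1 hR
    have hc0 : C0 ≤ max C0 1 := le_max_left _ _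
    constructor
    · nlinarith
    · nlinarith
  -- A_infty in interval form
  have hA' : ∀ a b : ℕ, a < b →
      (∑ j ∈ (Finset.Ico a b).filter
          (fun j => ω (T^[j] x) ≤ γ * ((∑ i ∈ Finset.Ico a b, g (T^[i] x))⁻¹ *
            ∑ i ∈ Finset.Ico a b, ω (T^[i] x) * g (T^[i] x))), g (T^[j] x))
        ≤ δ * ∑ i ∈ Finset.Ico a b, g (T^[i] x) := by
    intro a b hab
    have hx := hAx a (b - a) (by omega)
    set t := γ * ergAvgW T g ω (b - a) (T^[a] x) with ht
    have eg : ∑ j ∈ Finset.range (b - a), g (T^[j] (T^[a] x)) =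
        ∑ j ∈ Finset.Ico a b, g (T^[j] x) := by
      have := hshift0 g a (b - a)
      rwa [show a + (b - a) = b by omega] at this
    have ewg : ∑ j ∈ Finset.range (b - a), ω (T^[j] (T^[a] x)) * g (T^[j] (T^[a] x)) =
        ∑ j ∈ Finset.Ico a b, ω (T^[j] x) * g (T^[j] x) := by
      have := hshift0 (fun z => ω z * g z) a (b - a)
      rwa [show a + (b - a) = b by omega] at this
    have ef : ∑ j ∈ (Finset.range (b - a)).filter
          (fun j => ω (T^[j] (T^[a] x)) ≤ t), g (T^[j] (T^[a] x)) =
        ∑ j ∈ (Finset.Ico a b).filter (fun j => ω (T^[j] x) ≤ t), g (T^[j] x) := by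
      rw [Finset.sum_filter, Finset.sum_filter]
      have := hshift0 (fun z => if ω z ≤ t then g z else 0) a (b - a)
      rwa [show a + (b - a) = b by omega] at this
    rw [ef, eg] at hx
    have hSpos : 0 < ∑ i ∈ Finset.Ico a b, g (T^[i] x) :=
      Finset.sum_pos (fun i _ => hgpos _) (Finset.nonempty_Ico.2 hab)
    have ht' : t = γ * ((∑ i ∈ Finset.Ico a b, g (T^[i] x))⁻¹ *
        ∑ i ∈ Finset.Ico a b, ω (T^[i] x) * g (T^[i] x)) := by
      rw [ht]
      unfold ergAvgW
      rw [eg, ewg]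
    rw [ht'] at hx
    have := (inv_mul_le_iff₀ hSpos).1 hx
    linarith [this]
  -- conclude
  have hSpos : 0 < ∑ i ∈ Finset.range k, g (T^[i] x) :=
    Finset.sum_pos (fun i _ => hgpos _) (Finset.nonempty_range_iff.2 hk.ne')
  have hl : ∑ i ∈ Finset.range k, ω (T^[i] x) * g (T^[i] x) ≤
      lam * ∑ i ∈ Finset.range k, g (T^[i] x) := by
    unfold ergAvgW at hlam
    rw [inv_mul_eq_div, div_lt_iff₀ hSpos] at hlam
    linarith
  rw [Finset.range_eq_Ico] at hl ⊢
  exact aux_key (fun i => g (T^[i] x)) (fun i => ω (T^[i] x))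
    (fun i => hgpos _) (fun i => hωpos _) hC hγ0 hδ1 hdb' hA' k 0 k
    (by omega) hk lam hl
end

section
/- Let g and ω be weights and suppose g satisfies the doubling condition. If ω ∈ A^λ_∞(g), then there exist constants C, q > 1 such that ω ∈ RH_q(g), i.e., (T^g_{0,k-1}ω^q(x))^{1/q} ≤ C·T^g_{0,k-1}ω(x) for a.e. x ∈ X and every positive integer k. -/
open MeasureTheory Finset

/-- `ω ∈ RH_q(g)` with constant `C`. -/
def MemRHW {X : Type*} [MeasurableSpace X] (μ : Measure X) (T : X → X) (g ω : X → ℝ)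
    (C q : ℝ) : Prop :=
  ∀ᵐ x ∂μ, ∀ k : ℕ, 0 < k →
    ((∑ i ∈ Finset.range k, g (T^[i] x))⁻¹ *
        ∑ i ∈ Finset.range k, ω (T^[i] x) ^ q * g (T^[i] x)) ^ (1 / q) ≤
      C * ergAvgW T g ω k x


open Set in
lemma myIndInt (p A b : ℝ) (hp : -1 < p) :
    IntegrableOn (fun lam => lam ^ p * (if lam < b then (1:ℝ) else 0)) (Set.Ioi A) ∧
    ∫ lam in Set.Ioi A, lam ^ p * (if lam < b then (1:ℝ) else 0)
      = ((max b A) ^ (p+1) - A ^ (p+1)) / (p+1) := by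
  set b' := max b A with hb'
  have hAb' : A ≤ b' := le_max_right _ _
  have heq : Set.EqOn (fun lam => lam ^ p * (if lam < b then (1:ℝ) else 0))
      ((Set.Iio b').indicator (fun lam : ℝ => lam ^ p)) (Set.Ioi A) := by
    intro lam hlam
    simp only [Set.mem_Ioi] at hlam
    by_cases hb : lam < b
    · have : lam < b' := lt_of_lt_of_le hb (le_max_left _ _)
      simp [Set.indicator_of_mem, this, hb]
    · have : ¬ lam < b' := by
        simp only [hb', lt_max_iff, not_or]
        exact ⟨hb, not_lt.2 hlam.le⟩
      simp [Set.indicator_of_notMem, this, hb]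
  have hii : IntervalIntegrable (fun x : ℝ => x ^ p) volume A b' :=
    intervalIntegral.intervalIntegrable_rpow' hp
  have hIoc : IntegrableOn (fun x : ℝ => x ^ p) (Set.Ioc A b') volume := by
    have h1 := hii.1
    exact h1
  have hint : IntegrableOn ((Set.Iio b').indicator (fun lam : ℝ => lam ^ p)) (Set.Ioi A) := by
    rw [IntegrableOn, integrable_indicator_iff measurableSet_Iio]
    rw [IntegrableOn, Measure.restrict_restrict measurableSet_Iio,
      Set.inter_comm, Set.Ioi_inter_Iio]
    exact hIoc.mono_set Set.Ioo_subset_Ioc_self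
  constructor
  · exact (integrableOn_congr_fun heq measurableSet_Ioi).2 hint
  · rw [setIntegral_congr_fun measurableSet_Ioi heq,
      setIntegral_indicator measurableSet_Iio, Set.Ioi_inter_Iio,
      ← MeasureTheory.integral_Ioc_eq_integral_Ioo,
      ← intervalIntegral.integral_of_le hAb',
      integral_rpow (Or.inl hp)]

lemma myKey (C β q : ℝ) (hC : 0 < C) (hβ : 0 < β) (hq1 : 1 < q) (hq2 : q ≤ 2)
    (hθ : (q - 1) * C ≤ q * β ^ q / 2)
    (k : ℕ) (hk : 0 < k) (w gg : ℕ → ℝ) (hw : ∀ i, 0 < w i) (hg : ∀ i, 0 < gg i)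
    (A : ℝ) (hA : A = (∑ i ∈ range k, gg i)⁻¹ * ∑ i ∈ range k, w i * gg i)
    (hyp : ∀ lam : ℝ, A < lam →
      ∑ i ∈ (range k).filter (fun i => lam < w i), w i * gg i ≤
        C * lam * ∑ i ∈ (range k).filter (fun i => β * lam < w i), gg i) :
    ∑ i ∈ range k, w i ^ q * gg i ≤ 2 * A ^ q * ∑ i ∈ range k, gg i := by
  have hne : (range k).Nonempty := nonempty_range_iff.2 hk.ne'
  have hG : 0 < ∑ i ∈ range k, gg i := Finset.sum_pos (fun i _ => hg i) hne
  have hSW : 0 < ∑ i ∈ range k, w i * gg i :=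
    Finset.sum_pos (fun i _ => mul_pos (hw i) (hg i)) hne
  have hA0 : 0 < A := by rw [hA]; positivity
  have hp1 : (-1:ℝ) < q - 2 := by linarith
  have hp2 : (-1:ℝ) < q - 1 := by linarith
  have hqpos : (0:ℝ) < q - 1 := by linarith
  have hβq : (0:ℝ) < β ^ q := Real.rpow_pos_of_pos hβ q
  -- rpow splitting
  have hpow : ∀ y : ℝ, 0 < y → y ^ q = y ^ (q-1) * y := by
    intro y hy
    have h2 := Real.rpow_add hy (q-1) 1
    rw [Real.rpow_one] at h2
    rw [← h2]
    congr 1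
    ring
  set S := ∑ i ∈ range k, w i ^ q * gg i with hS
  have hS0 : 0 ≤ S := Finset.sum_nonneg fun i _ =>
    mul_nonneg (Real.rpow_nonneg (hw i).le q) (hg i).le
  -- the two integrands
  set F1 : ℝ → ℝ := fun lam => ∑ i ∈ range k,
    (w i * gg i) * (lam ^ (q-2) * (if lam < w i then (1:ℝ) else 0)) with hF1
  set F2 : ℝ → ℝ := fun lam => ∑ i ∈ range k,
    (gg i) * (lam ^ (q-1) * (if lam < w i / β then (1:ℝ) else 0)) with hF2
  have hI1 : ∫ lam in Set.Ioi A, F1 lam =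
      ∑ i ∈ range k, (w i * gg i) *
        (((max (w i) A) ^ (q-1) - A ^ (q-1)) / (q-1)) := by
    rw [hF1, integral_finset_sum _ (fun i _ => ((myIndInt (q-2) A (w i) hp1).1.const_mul _))]
    refine Finset.sum_congr rfl fun i _ => ?_
    rw [MeasureTheory.integral_const_mul, (myIndInt (q-2) A (w i) hp1).2,
      show q-2+1 = q-1 by ring]
  have hI2 : ∫ lam in Set.Ioi A, F2 lam =
      ∑ i ∈ range k, (gg i) *
        (((max (w i / β) A) ^ q - A ^ q) / q) := by
    rw [hF2, integral_finset_sum _ (fun i _ => ((myIndInt (q-1) A (w i / β) hp2).1.const_mul _))]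
    refine Finset.sum_congr rfl fun i _ => ?_
    rw [MeasureTheory.integral_const_mul, (myIndInt (q-1) A (w i / β) hp2).2,
      show q-1+1 = q by ring]
  -- Step 1 : S ≤ A^(q-1) * SW + (q-1) * ∫ F1
  have step1 : S ≤ A ^ (q-1) * (∑ i ∈ range k, w i * gg i) + (q-1) * ∫ lam in Set.Ioi A, F1 lam := by
    rw [hI1, Finset.mul_sum, Finset.mul_sum, ← Finset.sum_add_distrib]
    refine Finset.sum_le_sum fun i _ => ?_
    rcases le_or_gt (w i) A with hle | hlt
    · rw [max_eq_right hle]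
      have h1 : w i ^ q * gg i ≤ A ^ (q-1) * (w i * gg i) := by
        rw [hpow _ (hw i)]
        have : w i ^ (q-1) ≤ A ^ (q-1) := Real.rpow_le_rpow (hw i).le hle hqpos.le
        have h3 := mul_le_mul_of_nonneg_right this (mul_pos (hw i) (hg i)).le
        nlinarith [h3]
      simp only [sub_self, zero_div, mul_zero, add_zero]
      exact h1
    · rw [max_eq_left hlt.le]
      have : w i ^ q * gg i = A ^ (q-1) * (w i * gg i)
          + (q-1) * ((w i * gg i) * ((w i ^ (q-1) - A ^ (q-1)) / (q-1))) := by
        rw [hpow _ (hw i)]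
        field_simp
        ring
      rw [this]
  -- Step 2 : ∫ F1 ≤ C * ∫ F2
  have hint2 : IntegrableOn F2 (Set.Ioi A) := by
    rw [hF2]
    exact integrable_finset_sum _ (fun i _ => ((myIndInt (q-1) A (w i / β) hp2).1.const_mul _))
  have step2 : (∫ lam in Set.Ioi A, F1 lam) ≤ C * ∫ lam in Set.Ioi A, F2 lam := by
    rw [show C * ∫ lam in Set.Ioi A, F2 lam = ∫ lam in Set.Ioi A, C * F2 lam from
      (MeasureTheory.integral_const_mul C _).symm]
    refine integral_mono_of_nonneg ?_ (hint2.const_mul C) ?_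
    · refine (ae_restrict_iff' measurableSet_Ioi).2 (Filter.Eventually.of_forall fun lam hlam => ?_)
      have hlam0 : (0:ℝ) < lam := lt_trans hA0 hlam
      refine Finset.sum_nonneg fun i _ => ?_
      have h5 : (0:ℝ) ≤ if lam < w i then (1:ℝ) else 0 := by split_ifs <;> norm_num
      exact mul_nonneg (mul_nonneg (hw i).le (hg i).le)
        (mul_nonneg (Real.rpow_nonneg hlam0.le _) h5)
    · refine (ae_restrict_iff' measurableSet_Ioi).2 (Filter.Eventually.of_forall fun lam hlam => ?_)
      rw [Set.mem_Ioi] at hlam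
      have hlam0 : (0:ℝ) < lam := lt_trans hA0 hlam
      have hW := hyp lam hlam
      have hcond : ∀ i, (β * lam < w i) ↔ (lam < w i / β) := by
        intro i; rw [lt_div_iff₀ hβ]; constructor <;> intro h <;> nlinarith
      have e1 : F1 lam = lam ^ (q-2) *
          ∑ i ∈ (range k).filter (fun i => lam < w i), w i * gg i := by
        rw [hF1, Finset.sum_filter, Finset.mul_sum]
        exact Finset.sum_congr rfl fun i _ => by split_ifs <;> ring
      have e2 : F2 lam = lam ^ (q-1) *
          ∑ i ∈ (range k).filter (fun i => β * lam < w i), gg i := by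
        rw [hF2, Finset.sum_filter, Finset.mul_sum]
        refine Finset.sum_congr rfl fun i _ => ?_
        by_cases hc : lam < w i / β
        · rw [if_pos hc, if_pos ((hcond i).2 hc)]; ring
        · rw [if_neg hc, if_neg (fun hx => hc ((hcond i).1 hx))]; ring
      show F1 lam ≤ C * F2 lam
      rw [e1, e2]
      have hnn : (0:ℝ) ≤ lam ^ (q-2) := Real.rpow_nonneg hlam0.le _
      calc lam ^ (q-2) * ∑ i ∈ (range k).filter (fun i => lam < w i), w i * gg i
          ≤ lam ^ (q-2) * (C * lam * ∑ i ∈ (range k).filter (fun i => β * lam < w i), gg i) :=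
            mul_le_mul_of_nonneg_left hW hnn
        _ = C * (lam ^ (q-1) * ∑ i ∈ (range k).filter (fun i => β * lam < w i), gg i) := by
            rw [show q - 1 = (q-2) + 1 by ring, Real.rpow_add hlam0, Real.rpow_one]
            ring
  -- Step 3 : ∫ F2 ≤ S / (q * β^q)
  have step3 : (∫ lam in Set.Ioi A, F2 lam) ≤ S / (q * β ^ q) := by
    rw [hI2, hS]
    have : ∀ i ∈ range k, gg i * (((max (w i / β) A) ^ q - A ^ q) / q)
        ≤ (w i ^ q * gg i) / (q * β ^ q) := by
      intro i _
      have hterm : ((max (w i / β) A) ^ q - A ^ q) / q ≤ (w i / β) ^ q / q := by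
        rcases le_or_gt (w i / β) A with hle | hlt
        · rw [max_eq_right hle]
          have : (0:ℝ) ≤ (w i / β) ^ q := Real.rpow_nonneg (div_nonneg (hw i).le hβ.le) _
          simp only [sub_self, zero_div]
          exact div_nonneg this (by linarith)
        · rw [max_eq_left hlt.le]
          have hAq : (0:ℝ) ≤ A ^ q := Real.rpow_nonneg hA0.le _
          have hq0 : (0:ℝ) < q := by linarith
          apply div_le_div_of_nonneg_right (by linarith) hq0.le
      have hdiv : (w i / β) ^ q = w i ^ q / β ^ q := Real.div_rpow (hw i).le hβ.le q
      calc gg i * (((max (w i / β) A) ^ q - A ^ q) / q) ≤ gg i * ((w i / β) ^ q / q) :=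
            mul_le_mul_of_nonneg_left hterm (hg i).le
        _ = (w i ^ q * gg i) / (q * β ^ q) := by rw [hdiv]; field_simp
    calc ∑ i ∈ range k, gg i * (((max (w i / β) A) ^ q - A ^ q) / q)
        ≤ ∑ i ∈ range k, (w i ^ q * gg i) / (q * β ^ q) := Finset.sum_le_sum this
      _ = (∑ i ∈ range k, w i ^ q * gg i) / (q * β ^ q) := by rw [Finset.sum_div]
  -- combine
  have hAq : A ^ (q-1) * (∑ i ∈ range k, w i * gg i) = A ^ q * ∑ i ∈ range k, gg i := by
    have hSWA : (∑ i ∈ range k, w i * gg i) = A * ∑ i ∈ range k, gg i := by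
      rw [hA]; field_simp
    rw [hSWA, hpow A hA0]; ring
  have habs : (q-1) * (∫ lam in Set.Ioi A, F1 lam) ≤ S / 2 := by
    have h1 : (q-1) * (∫ lam in Set.Ioi A, F1 lam) ≤ (q-1) * (C * (S / (q * β ^ q))) := by
      apply mul_le_mul_of_nonneg_left _ hqpos.le
      calc (∫ lam in Set.Ioi A, F1 lam) ≤ C * ∫ lam in Set.Ioi A, F2 lam := step2
        _ ≤ C * (S / (q * β ^ q)) := mul_le_mul_of_nonneg_left step3 hC.le
    have hq0 : (0:ℝ) < q := by linarith
    have h2 : (q-1) * (C * (S / (q * β ^ q))) ≤ S / 2 := by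
      have hpos : (0:ℝ) < q * β ^ q := by positivity
      have h4 := mul_le_mul_of_nonneg_right hθ (div_nonneg hS0 hpos.le)
      calc (q-1) * (C * (S / (q * β ^ q))) = ((q-1) * C) * (S / (q * β ^ q)) := by ring
        _ ≤ (q * β ^ q / 2) * (S / (q * β ^ q)) := h4
        _ = S / 2 := by
            field_simp
    linarith
  have final := step1
  rw [hAq] at final
  have : S ≤ A ^ q * (∑ i ∈ range k, gg i) + S / 2 := le_trans final (by linarith)
  linarith


theorem stmt11 {X : Type*} [MeasurableSpace X] (μ : Measure X)
    [IsProbabilityMeasure μ] [NullSingletonClass μ] (hcomp : μ.IsComplete)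
    (T : X → X) (hTbij : Function.Bijective T) (hTerg : Ergodic T μ)
    (g ω : X → ℝ) (hg : Measurable g) (hgpos : ∀ x, 0 < g x)
    (hω : Measurable ω) (hωpos : ∀ x, 0 < ω x)
    (hgd : Doubling μ T g) (h : MemAlamW μ T g ω) :
    ∃ C q : ℝ, 1 < C ∧ 1 < q ∧ MemRHW μ T g ω C q := by
  obtain ⟨C, β, hC, hβ, hae⟩ := h
  set m := min β (β ^ (2:ℝ)) with hm
  have hm0 : 0 < m := lt_min hβ (Real.rpow_pos_of_pos hβ _)
  set q := 1 + min 1 (m / (2 * C)) with hqdef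
  have hmin0 : 0 < min 1 (m / (2 * C)) := lt_min one_pos (by positivity)
  have hq1 : 1 < q := by rw [hqdef]; linarith
  have hq2 : q ≤ 2 := by
    have := min_le_left 1 (m / (2 * C)); rw [hqdef]; linarith
  have hβq : m ≤ β ^ q := by
    rcases le_or_gt 1 β with hb | hb
    · have h1 : β ^ (1:ℝ) ≤ β ^ q := Real.rpow_le_rpow_of_exponent_le hb hq1.le
      rw [Real.rpow_one] at h1
      exact le_trans (min_le_left _ _) h1
    · have h1 : β ^ (2:ℝ) ≤ β ^ q := Real.rpow_le_rpow_of_exponent_ge hβ hb.le hq2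
      exact le_trans (min_le_right _ _) h1
  have hθ : (q - 1) * C ≤ q * β ^ q / 2 := by
    have h1 : q - 1 ≤ m / (2 * C) := by rw [hqdef]; simp [min_le_right]
    have h2 : (q - 1) * C ≤ m / 2 := by
      have := mul_le_mul_of_nonneg_right h1 hC.le
      calc (q - 1) * C ≤ m / (2 * C) * C := this
        _ = m / 2 := by field_simp
    have h3 : m / 2 ≤ β ^ q / 2 := by linarith
    have h4 : β ^ q / 2 ≤ q * β ^ q / 2 := by
      have hβq0 : (0:ℝ) < β ^ q := Real.rpow_pos_of_pos hβ q
      nlinarith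
    linarith
  refine ⟨2, q, one_lt_two, hq1, ?_⟩
  filter_upwards [hae] with x hx k hk
  set G := ∑ i ∈ Finset.range k, g (T^[i] x) with hG
  set A := ergAvgW T g ω k x with hAdef
  have hkey := myKey C β q hC hβ hq1 hq2 hθ k hk
    (fun i => ω (T^[i] x)) (fun i => g (T^[i] x))
    (fun i => hωpos _) (fun i => hgpos _) A (by rw [hAdef, ergAvgW])
    (fun lam hlam => hx k hk lam hlam)
  have hG0 : 0 < G := Finset.sum_pos (fun i _ => hgpos _)
    (Finset.nonempty_range_iff.2 hk.ne')
  have hA0 : 0 < A := by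
    rw [hAdef, ergAvgW]
    have : 0 < ∑ i ∈ Finset.range k, ω (T^[i] x) * g (T^[i] x) :=
      Finset.sum_pos (fun i _ => mul_pos (hωpos _) (hgpos _))
        (Finset.nonempty_range_iff.2 hk.ne')
    positivity
  have hS0 : (0:ℝ) ≤ ∑ i ∈ Finset.range k, ω (T^[i] x) ^ q * g (T^[i] x) :=
    Finset.sum_nonneg fun i _ => mul_nonneg (Real.rpow_nonneg (hωpos _).le q) (hgpos _).le
  have h1 : G⁻¹ * ∑ i ∈ Finset.range k, ω (T^[i] x) ^ q * g (T^[i] x) ≤ 2 * A ^ q := by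
    have h2 := mul_le_mul_of_nonneg_left hkey (inv_nonneg.2 hG0.le)
    have h3 : G⁻¹ * (2 * A ^ q * G) = 2 * A ^ q := by
      field_simp
    rw [← hG] at h2
    calc G⁻¹ * ∑ i ∈ Finset.range k, ω (T^[i] x) ^ q * g (T^[i] x) ≤ G⁻¹ * (2 * A ^ q * G) := h2
      _ = 2 * A ^ q := h3
  have h4 : (G⁻¹ * ∑ i ∈ Finset.range k, ω (T^[i] x) ^ q * g (T^[i] x)) ^ (1/q)
      ≤ (2 * A ^ q) ^ (1/q) :=
    Real.rpow_le_rpow (mul_nonneg (inv_nonneg.2 hG0.le) hS0) h1 (by positivity)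
  have h5 : (2 * A ^ q) ^ (1/q) = 2 ^ (1/q) * A := by
    rw [Real.mul_rpow (by norm_num) (Real.rpow_nonneg hA0.le q), one_div,
      Real.rpow_rpow_inv hA0.le (by positivity : q ≠ 0)]
  have h6 : (2:ℝ) ^ (1/q) ≤ 2 := by
    have : (2:ℝ) ^ (1/q) ≤ 2 ^ (1:ℝ) :=
      Real.rpow_le_rpow_of_exponent_le one_le_two
        (by rw [div_le_one (by positivity)]; linarith)
    rwa [Real.rpow_one] at this
  calc (G⁻¹ * ∑ i ∈ Finset.range k, ω (T^[i] x) ^ q * g (T^[i] x)) ^ (1/q)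
      ≤ (2 * A ^ q) ^ (1/q) := h4
    _ = 2 ^ (1/q) * A := h5
    _ ≤ 2 * A := mul_le_mul_of_nonneg_right h6 hA0.le
end

section
/- Let g and ω be weights. If there exist constants C, q > 1 such that ω ∈ RH_q(g), then ω ∈ A^CF_∞(g). -/
open MeasureTheory Finset

/-- `ω ∈ A^CF_∞(g)`. -/
def MemACFW {X : Type*} [MeasurableSpace X] (μ : Measure X) (T : X → X) (g ω : X → ℝ) : Prop :=
  ∃ C ε : ℝ, 1 < C ∧ 0 < ε ∧ ε < 1 ∧
    ∀ᵐ x ∂μ, ∀ k : ℕ, 0 < k → ∀ A ⊆ Finset.range k,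
      (∑ i ∈ A, ω (T^[i] x) * g (T^[i] x)) /
          (∑ i ∈ Finset.range k, ω (T^[i] x) * g (T^[i] x)) ≤
        C * ((∑ i ∈ A, g (T^[i] x)) / (∑ i ∈ Finset.range k, g (T^[i] x))) ^ ε

theorem stmt12 {X : Type*} [MeasurableSpace X] (μ : Measure X)
    [IsProbabilityMeasure μ] [NullSingletonClass μ] (hcomp : μ.IsComplete)
    (T : X → X) (hTbij : Function.Bijective T) (hTerg : Ergodic T μ)
    (g ω : X → ℝ) (hg : Measurable g) (hgpos : ∀ x, 0 < g x)
    (hω : Measurable ω) (hωpos : ∀ x, 0 < ω x)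
    (h : ∃ C q : ℝ, 1 < C ∧ 1 < q ∧ MemRHW μ T g ω C q) :
    MemACFW μ T g ω := by
  obtain ⟨C, q, hC, hq, hRH⟩ := h
  have hq0 : (0:ℝ) < q := lt_trans one_pos hq
  have hqi0 : (0:ℝ) < q⁻¹ := inv_pos.mpr hq0
  have hqi1 : q⁻¹ < 1 := inv_lt_one_of_one_lt₀ hq
  refine ⟨C, 1 - q⁻¹, hC, by linarith, by linarith, ?_⟩
  filter_upwards [hRH] with x hx k hk A hA
  set G : ℝ := ∑ i ∈ Finset.range k, g (T^[i] x) with hG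
  set S : ℝ := ∑ i ∈ Finset.range k, ω (T^[i] x) * g (T^[i] x) with hS
  set Q : ℝ := ∑ i ∈ Finset.range k, ω (T^[i] x) ^ q * g (T^[i] x) with hQ
  set GA : ℝ := ∑ i ∈ A, g (T^[i] x) with hGA
  set SA : ℝ := ∑ i ∈ A, ω (T^[i] x) * g (T^[i] x) with hSA
  set QA : ℝ := ∑ i ∈ A, ω (T^[i] x) ^ q * g (T^[i] x) with hQA
  have hne : (Finset.range k).Nonempty := Finset.nonempty_range_iff.mpr hk.ne'
  have hGpos : 0 < G :=
    Finset.sum_pos (fun i _ => hgpos _) hne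
  have hSpos : 0 < S :=
    Finset.sum_pos (fun i _ => mul_pos (hωpos _) (hgpos _)) hne
  have hGAnn : 0 ≤ GA := Finset.sum_nonneg fun i _ => (hgpos _).le
  have hQAnn : 0 ≤ QA := Finset.sum_nonneg fun i _ =>
    mul_nonneg (Real.rpow_nonneg (hωpos _).le _) (hgpos _).le
  -- Hölder on A
  have holder : SA ≤ GA ^ (1 - q⁻¹) * QA ^ q⁻¹ := by
    have := Real.inner_le_weight_mul_Lp_of_nonneg A hq.le
      (fun i => g (T^[i] x)) (fun i => ω (T^[i] x))
      (fun i => (hgpos _).le) (fun i => (hωpos _).le)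
    calc SA = ∑ i ∈ A, g (T^[i] x) * ω (T^[i] x) := by
              simp_rw [hSA, mul_comm]
      _ ≤ (∑ i ∈ A, g (T^[i] x)) ^ (1 - q⁻¹) *
            (∑ i ∈ A, g (T^[i] x) * ω (T^[i] x) ^ q) ^ q⁻¹ := this
      _ = GA ^ (1 - q⁻¹) * QA ^ q⁻¹ := by
            congr 1
            congr 1
            simp_rw [hQA, mul_comm]
  have hQAQ : QA ≤ Q :=
    Finset.sum_le_sum_of_subset_of_nonneg hA fun i _ _ =>
      mul_nonneg (Real.rpow_nonneg (hωpos _).le _) (hgpos _).le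
  -- RH estimate raised appropriately
  have hRHk : (G⁻¹ * Q) ^ (1 / q) ≤ C * (G⁻¹ * S) := hx k hk
  have hQpow : Q ^ q⁻¹ ≤ C * (G⁻¹ * S) * G ^ q⁻¹ := by
    have h1 : (G⁻¹ * Q) ^ q⁻¹ = G⁻¹ ^ q⁻¹ * Q ^ q⁻¹ := by
      apply Real.mul_rpow (inv_nonneg.mpr hGpos.le)
      exact Finset.sum_nonneg fun i _ =>
        mul_nonneg (Real.rpow_nonneg (hωpos _).le _) (hgpos _).le
    have h2 : G⁻¹ ^ q⁻¹ * G ^ q⁻¹ = 1 := by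
      rw [← Real.mul_rpow (inv_nonneg.mpr hGpos.le) hGpos.le,
        inv_mul_cancel₀ hGpos.ne', Real.one_rpow]
    have h3 : Q ^ q⁻¹ = (G⁻¹ * Q) ^ q⁻¹ * G ^ q⁻¹ := by
      rw [h1, mul_assoc]
      nth_rewrite 1 [← one_mul (Q ^ q⁻¹)]
      rw [← h2]; ring
    rw [h3]
    have hGq : 0 ≤ G ^ q⁻¹ := Real.rpow_nonneg hGpos.le _
    rw [one_div] at hRHk
    exact mul_le_mul_of_nonneg_right hRHk hGq
  -- combine
  have hQApow : QA ^ q⁻¹ ≤ Q ^ q⁻¹ := Real.rpow_le_rpow hQAnn hQAQ hqi0.le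
  have key : SA ≤ GA ^ (1 - q⁻¹) * (C * (G⁻¹ * S) * G ^ q⁻¹) := by
    refine holder.trans ?_
    exact mul_le_mul_of_nonneg_left (hQApow.trans hQpow) (Real.rpow_nonneg hGAnn _)
  -- rewrite target
  rw [div_le_iff₀ hSpos]
  have hid : G⁻¹ * G ^ q⁻¹ = (G ^ (1 - q⁻¹))⁻¹ := by
    rw [← Real.rpow_neg hGpos.le]
    rw [show -(1 - q⁻¹) = q⁻¹ - 1 by ring, Real.rpow_sub hGpos, Real.rpow_one,
      div_eq_mul_inv, mul_comm]
  calc SA ≤ GA ^ (1 - q⁻¹) * (C * (G⁻¹ * S) * G ^ q⁻¹) := key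
    _ = C * (GA ^ (1 - q⁻¹) * (G⁻¹ * G ^ q⁻¹)) * S := by ring
    _ = C * (GA / G) ^ (1 - q⁻¹) * S := by
        rw [hid, Real.div_rpow hGAnn hGpos.le, div_eq_mul_inv]
end

section
/- Let ω be a weight. If ω ∈ A^exp_∞, then ω ∈ A^avg_∞. -/
open MeasureTheory Finset

/-- `ω ∈ A^exp_∞`. -/
def MemAexp {X : Type*} [MeasurableSpace X] (μ : Measure X) (T : X → X) (ω : X → ℝ) : Prop :=
  ∃ C : ℝ, 0 < C ∧
    ∀ᵐ x ∂μ, ∀ k : ℕ, 0 < k →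
      ((k : ℝ)⁻¹ * ∑ i ∈ Finset.range k, ω (T^[i] x)) *
        Real.exp ((k : ℝ)⁻¹ * ∑ i ∈ Finset.range k, Real.log (ω (T^[i] x))⁻¹) ≤ C

theorem stmt14 {X : Type*} [MeasurableSpace X] (μ : Measure X)
    [IsProbabilityMeasure μ] [NullSingletonClass μ] (hcomp : μ.IsComplete)
    (T : X → X) (hTbij : Function.Bijective T) (hTerg : Ergodic T μ)
    (ω : X → ℝ) (hω : Measurable ω) (hωpos : ∀ x, 0 < ω x)
    (h : MemAexp μ T ω) :
    MemAavg μ T ω := by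
  obtain ⟨C, hC, hae⟩ := h
  set L : ℝ := max (Real.log C) 1 with hL
  have hL1 : (1:ℝ) ≤ L := le_max_right _ _
  have hLC : Real.log C ≤ L := le_max_left _ _
  have hLpos : (0:ℝ) < L := lt_of_lt_of_le one_pos hL1
  refine ⟨Real.exp (-1 - 2 * L), 1/2, Real.exp_pos _, ?_, by norm_num, by norm_num, ?_⟩
  · exact Real.exp_lt_one_iff.mpr (by nlinarith)
  · filter_upwards [hae] with x hx k hk
    set γ : ℝ := Real.exp (-1 - 2 * L) with hγdef
    have hγpos : 0 < γ := Real.exp_pos _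
    have hlogγ : Real.log γ = -1 - 2 * L := Real.log_exp _
    set A : ℝ := ergAvg T ω k x with hAdef
    have hkpos : (0:ℝ) < k := Nat.cast_pos.mpr hk
    have hAeq : A = (k : ℝ)⁻¹ * ∑ i ∈ Finset.range k, ω (T^[i] x) := rfl
    have hApos : 0 < A := by
      rw [hAeq]
      exact mul_pos (inv_pos.mpr hkpos)
        (Finset.sum_pos (fun i _ => hωpos _) ⟨0, Finset.mem_range.mpr hk⟩)
    set B := (Finset.range k).filter (fun j => ω (T^[j] x) ≤ γ * A) with hBdef
    set Bc := (Finset.range k).filter (fun j => ¬ ω (T^[j] x) ≤ γ * A) with hBcdef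
    have hcard : B.card + Bc.card = k := by
      rw [hBdef, hBcdef]
      simpa using Finset.card_filter_add_card_filter_not
        (s := Finset.range k) (p := fun j => ω (T^[j] x) ≤ γ * A)
    -- sum of ω equals k * A
    have hsumω : ∑ i ∈ Finset.range k, ω (T^[i] x) = k * A := by
      rw [hAeq]; field_simp
    -- bound on the sum of logs over B
    have hB1 : ∑ j ∈ B, Real.log (ω (T^[j] x)) ≤ B.card * (Real.log γ + Real.log A) := by
      rw [← nsmul_eq_mul]
      apply Finset.sum_le_card_nsmul
      intro j hj
      rw [hBdef, Finset.mem_filter] at hj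
      calc Real.log (ω (T^[j] x)) ≤ Real.log (γ * A) :=
            Real.log_le_log (hωpos _) hj.2
        _ = Real.log γ + Real.log A := Real.log_mul (ne_of_gt hγpos) (ne_of_gt hApos)
    -- bound on the sum of logs over Bc (tangent line bound)
    have hB2 : ∑ j ∈ Bc, Real.log (ω (T^[j] x)) ≤
        (∑ j ∈ Bc, ω (T^[j] x)) / A - Bc.card + Bc.card * Real.log A := by
      have : ∀ j ∈ Bc, Real.log (ω (T^[j] x)) ≤ ω (T^[j] x) / A - 1 + Real.log A := by
        intro j _
        have h1 : Real.log (ω (T^[j] x) / A) ≤ ω (T^[j] x) / A - 1 :=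
          Real.log_le_sub_one_of_pos (div_pos (hωpos _) hApos)
        rw [Real.log_div (ne_of_gt (hωpos _)) (ne_of_gt hApos)] at h1
        linarith
      calc ∑ j ∈ Bc, Real.log (ω (T^[j] x))
          ≤ ∑ j ∈ Bc, (ω (T^[j] x) / A - 1 + Real.log A) := Finset.sum_le_sum this
        _ = (∑ j ∈ Bc, ω (T^[j] x)) / A - Bc.card + Bc.card * Real.log A := by
            rw [Finset.sum_add_distrib, Finset.sum_sub_distrib, Finset.sum_const,
              Finset.sum_const, Finset.sum_div]
            simp [nsmul_eq_mul]
    have hBcle : ∑ j ∈ Bc, ω (T^[j] x) ≤ k * A := by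
      rw [← hsumω, hBcdef]
      exact Finset.sum_le_sum_of_subset_of_nonneg (Finset.filter_subset _ _)
        (fun i _ _ => le_of_lt (hωpos _))
    -- combined bound on sum of logs
    have hsum : ∑ j ∈ Finset.range k, Real.log (ω (T^[j] x)) ≤
        B.card * (Real.log γ + 1) + k * Real.log A := by
      have hsplit : ∑ j ∈ Finset.range k, Real.log (ω (T^[j] x)) =
          (∑ j ∈ B, Real.log (ω (T^[j] x))) + ∑ j ∈ Bc, Real.log (ω (T^[j] x)) := by
        rw [hBdef, hBcdef]
        exact (Finset.sum_filter_add_sum_filter_not _ _ _).symm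
      have hdiv : (∑ j ∈ Bc, ω (T^[j] x)) / A ≤ k :=
        (div_le_iff₀ hApos).mpr hBcle
      have hcardR : (B.card : ℝ) + Bc.card = k := by exact_mod_cast hcard
      have hlogA : (B.card : ℝ) * Real.log A + Bc.card * Real.log A = k * Real.log A := by
        rw [← add_mul, hcardR]
      rw [hsplit]
      nlinarith [hB1, hB2, hdiv, hlogA]
    -- convert the hypothesis
    have hxk := hx k hk
    have hloginv : ∑ i ∈ Finset.range k, Real.log (ω (T^[i] x))⁻¹ =
        -∑ i ∈ Finset.range k, Real.log (ω (T^[i] x)) := by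
      rw [← Finset.sum_neg_distrib]
      exact Finset.sum_congr rfl fun i _ => Real.log_inv _
    rw [← hAeq, hloginv] at hxk
    -- key exponential inequality
    have hβexp : Real.exp ((B.card : ℝ) / k * (2 * L)) ≤ C := by
      have h1 : (k:ℝ)⁻¹ * ∑ i ∈ Finset.range k, Real.log (ω (T^[i] x)) ≤
          (B.card : ℝ) / k * (Real.log γ + 1) + Real.log A := by
        calc (k:ℝ)⁻¹ * ∑ i ∈ Finset.range k, Real.log (ω (T^[i] x))
            ≤ (k:ℝ)⁻¹ * (B.card * (Real.log γ + 1) + k * Real.log A) :=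
              mul_le_mul_of_nonneg_left hsum (inv_nonneg.mpr hkpos.le)
          _ = (B.card : ℝ) / k * (Real.log γ + 1) + Real.log A := by
              rw [mul_add, ← mul_assoc (k:ℝ)⁻¹ (k:ℝ), inv_mul_cancel₀ hkpos.ne', one_mul,
                div_eq_mul_inv]; ring
      have harg : -((B.card : ℝ) / k * (Real.log γ + 1)) - Real.log A ≤
          (k : ℝ)⁻¹ * -∑ i ∈ Finset.range k, Real.log (ω (T^[i] x)) := by
        rw [mul_neg]; linarith
      have h2 : A * Real.exp (-((B.card : ℝ) / k * (Real.log γ + 1)) - Real.log A) ≤ C :=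
        le_trans (mul_le_mul_of_nonneg_left (Real.exp_le_exp.mpr harg) hApos.le) hxk
      rw [Real.exp_sub, Real.exp_log hApos] at h2
      have hfix : A * (Real.exp (-((B.card : ℝ) / k * (Real.log γ + 1))) / A) =
          Real.exp (-((B.card : ℝ) / k * (Real.log γ + 1))) := by
        field_simp
      rw [hfix] at h2
      have hargeq : -((B.card : ℝ) / k * (Real.log γ + 1)) = (B.card : ℝ) / k * (2 * L) := by
        rw [hlogγ]; ring
      rwa [hargeq] at h2
    have hβ : (B.card : ℝ) / k * (2 * L) ≤ L := by
      have := (Real.le_log_iff_exp_le hC).mpr hβexp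
      linarith
    have h12 : (B.card : ℝ) / k ≤ L / (2 * L) :=
      (le_div_iff₀ (by positivity)).mpr hβ
    have : L / (2 * L) = 1 / 2 := by field_simp
    rw [this] at h12
    exact h12
end

section
/- Let ω be a weight. Then ω ∈ A^exp_∞ if and only if ω ∈ A^SW_∞. -/
open MeasureTheory Finset
open Filter Topology

/-- `ω ∈ A^SW_∞`. -/
def MemASW {X : Type*} [MeasurableSpace X] (μ : Measure X) (T : X → X) (ω : X → ℝ) : Prop :=
  ∃ C : ℝ, 1 < C ∧
    ∀ s : ℝ, 0 < s → s < 1 →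
      ∀ᵐ x ∂μ, ∀ k : ℕ, 0 < k →
        (k : ℝ)⁻¹ * ∑ i ∈ Finset.range k, ω (T^[i] x) ≤
          C * ((k : ℝ)⁻¹ * ∑ i ∈ Finset.range k, ω (T^[i] x) ^ s) ^ (1 / s)


lemma auxJensen (k : ℕ) (hk : 0 < k) (a : ℕ → ℝ) (ha : ∀ i, 0 < a i) :
    Real.exp ((k : ℝ)⁻¹ * ∑ i ∈ range k, Real.log (a i)) ≤
      (k : ℝ)⁻¹ * ∑ i ∈ range k, a i := by
  have hk' : (0:ℝ) < k := Nat.cast_pos.mpr hk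
  have h := Real.geom_mean_le_arith_mean_weighted (range k) (fun _ => (k:ℝ)⁻¹) a
    (fun i _ => by positivity)
    (by simp [Finset.sum_const, mul_comm]; field_simp)
    (fun i _ => (ha i).le)
  calc Real.exp ((k : ℝ)⁻¹ * ∑ i ∈ range k, Real.log (a i))
      = ∏ i ∈ range k, a i ^ ((k:ℝ)⁻¹) := by
        rw [Finset.mul_sum, Real.exp_sum]
        refine Finset.prod_congr rfl fun i _ => ?_
        rw [Real.rpow_def_of_pos (ha i), mul_comm]
    _ ≤ ∑ i ∈ range k, (k:ℝ)⁻¹ * a i := h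
    _ = (k : ℝ)⁻¹ * ∑ i ∈ range k, a i := by rw [Finset.mul_sum]

lemma auxTendsto (k : ℕ) (hk : 0 < k) (a : ℕ → ℝ) (ha : ∀ i, 0 < a i) :
    Tendsto (fun s : ℝ => ((k : ℝ)⁻¹ * ∑ i ∈ range k, a i ^ s) ^ (1 / s))
      (𝓝[>] (0:ℝ))
      (𝓝 (Real.exp ((k : ℝ)⁻¹ * ∑ i ∈ range k, Real.log (a i)))) := by
  have hk' : (0:ℝ) < k := Nat.cast_pos.mpr hk
  set h : ℝ → ℝ := fun s => (k : ℝ)⁻¹ * ∑ i ∈ range k, a i ^ s with hdef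
  have hpos : ∀ s, 0 < h s := fun s => by
    apply mul_pos (by positivity)
    exact Finset.sum_pos (fun i _ => Real.rpow_pos_of_pos (ha i) s) (by simp [hk.ne'])
  have h0 : h 0 = 1 := by
    simp [hdef, Real.rpow_zero]
    field_simp
  set L : ℝ := (k : ℝ)⁻¹ * ∑ i ∈ range k, Real.log (a i) with hL
  have hderiv : HasDerivAt h L 0 := by
    have hsum : HasDerivAt (fun s : ℝ => ∑ i ∈ range k, a i ^ s)
        (∑ i ∈ range k, Real.log (a i)) 0 := by
      exact HasDerivAt.fun_sum
        (fun i _ => by simpa using ((Real.hasStrictDerivAt_const_rpow (ha i) 0).hasDerivAt))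
    have := hsum.const_mul ((k:ℝ)⁻¹)
    rw [hdef, hL]
    convert this using 2 <;> simp [Finset.mul_sum]
  set g : ℝ → ℝ := fun s => Real.log (h s) with hg
  have hg0 : g 0 = 0 := by simp [hg, h0]
  have hgd : HasDerivAt g L 0 := by
    have := hderiv.log (by rw [h0]; norm_num)
    simpa [hg, h0] using this
  have hslope : Tendsto (fun s : ℝ => g s / s) (𝓝[≠] (0:ℝ)) (𝓝 L) := by
    have := hasDerivAt_iff_tendsto_slope.mp hgd
    refine this.congr fun s => ?_
    simp [slope_def_field, hg0]
  have hslope' : Tendsto (fun s : ℝ => g s / s) (𝓝[>] (0:ℝ)) (𝓝 L) :=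
    hslope.mono_left (nhdsWithin_mono _ fun s hs => ne_of_gt hs)
  have := (Real.continuous_exp.continuousAt.tendsto).comp hslope'
  refine this.congr fun s => ?_
  rw [Real.rpow_def_of_pos (hpos s)]
  simp [hg, div_eq_mul_inv, one_div, Function.comp]

theorem stmt16 {X : Type*} [MeasurableSpace X] (μ : Measure X)
    [IsProbabilityMeasure μ] [NullSingletonClass μ] (hcomp : μ.IsComplete)
    (T : X → X) (hTbij : Function.Bijective T) (hTerg : Ergodic T μ)
    (ω : X → ℝ) (hω : Measurable ω) (hωpos : ∀ x, 0 < ω x)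
     :
    MemAexp μ T ω ↔ MemASW μ T ω := by
  constructor
  · rintro ⟨C, hC, hae⟩
    refine ⟨C + 1, by linarith, fun s hs hs1 => ?_⟩
    filter_upwards [hae] with x hx k hk
    set a : ℕ → ℝ := fun i => ω (T^[i] x) with hadef
    have hapos : ∀ i, 0 < a i := fun i => hωpos _
    set A : ℝ := (k : ℝ)⁻¹ * ∑ i ∈ range k, a i with hA
    set L : ℝ := (k : ℝ)⁻¹ * ∑ i ∈ range k, Real.log (a i) with hLdef
    have hApos : 0 ≤ A := by
      apply mul_nonneg (by positivity)
      exact Finset.sum_nonneg fun i _ => (hapos i).le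
    have hx' : A * Real.exp (-L) ≤ C := by
      have := hx k hk
      have hinv : (k : ℝ)⁻¹ * ∑ i ∈ range k, Real.log (a i)⁻¹ = -L := by
        simp only [Real.log_inv, Finset.sum_neg_distrib, hLdef, mul_neg]
      rwa [hinv] at this
    have hAle : A ≤ C * Real.exp L := by
      have := mul_le_mul_of_nonneg_right hx' (Real.exp_pos L).le
      rwa [mul_assoc, ← Real.exp_add, neg_add_cancel, Real.exp_zero, mul_one] at this
    have hjensen : Real.exp L ≤ ((k : ℝ)⁻¹ * ∑ i ∈ range k, a i ^ s) ^ (1 / s) := by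
      have hJ := auxJensen k hk (fun i => a i ^ s) (fun i => Real.rpow_pos_of_pos (hapos i) s)
      have hlog : (k : ℝ)⁻¹ * ∑ i ∈ range k, Real.log (a i ^ s) = s * L := by
        simp only [hLdef, Finset.mul_sum]
        refine Finset.sum_congr rfl fun i _ => ?_
        rw [Real.log_rpow (hapos i)]; ring
      rw [hlog] at hJ
      have := Real.rpow_le_rpow (Real.exp_pos (s * L)).le hJ (one_div_pos.mpr hs).le
      calc Real.exp L = Real.exp (s * L) ^ (1/s) := by
            rw [← Real.exp_mul]
            congr 1
            field_simp
        _ ≤ _ := this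
    have hrpow_nonneg : (0:ℝ) ≤ ((k : ℝ)⁻¹ * ∑ i ∈ range k, a i ^ s) ^ (1 / s) :=
      Real.rpow_nonneg (mul_nonneg (by positivity)
        (Finset.sum_nonneg fun i _ => (Real.rpow_pos_of_pos (hapos i) s).le)) _
    calc A ≤ C * Real.exp L := hAle
      _ ≤ C * ((k : ℝ)⁻¹ * ∑ i ∈ range k, a i ^ s) ^ (1 / s) :=
          mul_le_mul_of_nonneg_left hjensen hC.le
      _ ≤ (C + 1) * ((k : ℝ)⁻¹ * ∑ i ∈ range k, a i ^ s) ^ (1 / s) := by nlinarith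
  · rintro ⟨C, hC, hsw⟩
    refine ⟨C, by linarith, ?_⟩
    have hspos : ∀ n : ℕ, (0:ℝ) < 1 / ((n:ℝ) + 2) := fun n => by positivity
    have hslt : ∀ n : ℕ, (1:ℝ) / ((n:ℝ) + 2) < 1 := fun n => by
      rw [div_lt_one (by positivity)]
      have : (0:ℝ) ≤ (n:ℝ) := Nat.cast_nonneg n
      linarith
    have hae : ∀ᵐ x ∂μ, ∀ n : ℕ, ∀ k : ℕ, 0 < k →
        (k : ℝ)⁻¹ * ∑ i ∈ range k, ω (T^[i] x) ≤
          C * ((k : ℝ)⁻¹ * ∑ i ∈ range k, ω (T^[i] x) ^ (1 / ((n:ℝ) + 2))) ^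
            (1 / (1 / ((n:ℝ) + 2))) :=
      ae_all_iff.mpr fun n => hsw _ (hspos n) (hslt n)
    filter_upwards [hae] with x hx k hk
    set a : ℕ → ℝ := fun i => ω (T^[i] x) with hadef
    have hapos : ∀ i, 0 < a i := fun i => hωpos _
    set A : ℝ := (k : ℝ)⁻¹ * ∑ i ∈ range k, a i with hA
    set L : ℝ := (k : ℝ)⁻¹ * ∑ i ∈ range k, Real.log (a i) with hLdef
    have hAle : A ≤ C * Real.exp L := by
      have htend : Tendsto (fun n : ℕ => (1:ℝ) / ((n:ℝ) + 2)) atTop (𝓝[>] (0:ℝ)) := by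
        apply tendsto_nhdsWithin_of_tendsto_nhds_of_eventually_within
        · have : Tendsto (fun n : ℕ => ((n:ℝ) + 2)) atTop atTop :=
            tendsto_atTop_add_const_right _ 2 tendsto_natCast_atTop_atTop
          simpa [one_div, Pi.inv_def] using this.inv_tendsto_atTop
        · exact Filter.Eventually.of_forall fun n => hspos n
      have hlim := ((auxTendsto k hk a hapos).comp htend).const_mul C
      refine ge_of_tendsto hlim (Filter.Eventually.of_forall fun n => ?_)
      exact hx n k hk
    have h2 := mul_le_mul_of_nonneg_right hAle (Real.exp_pos (-L)).le
    have hCe : C * Real.exp L * Real.exp (-L) = C := by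
      rw [mul_assoc, ← Real.exp_add, add_neg_cancel, Real.exp_zero, mul_one]
    rw [hCe] at h2
    have hinv : (k : ℝ)⁻¹ * ∑ i ∈ range k, Real.log (a i)⁻¹ = -L := by
      simp only [Real.log_inv, Finset.sum_neg_distrib, hLdef, mul_neg]
    rw [hinv]
    exact h2
end

section
/- Let ω be a weight. If ω ∈ A^exp_∞, then ω ∈ A^med_∞. -/
open MeasureTheory Finset

/-- `m` is a median of `ω` of length `k` at `x`. -/
def IsMedian {X : Type*} (T : X → X) (ω : X → ℝ) (k : ℕ) (x : X) (m : ℝ) : Prop :=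
  (((Finset.range k).filter fun i => ω (T^[i] x) < m).card : ℝ) ≤ k / 2 ∧
  (((Finset.range k).filter fun i => m < ω (T^[i] x)).card : ℝ) ≤ k / 2

/-- `ω ∈ A^med_∞`. -/
def MemAmed {X : Type*} [MeasurableSpace X] (μ : Measure X) (T : X → X) (ω : X → ℝ) : Prop :=
  ∃ C : ℝ, 1 < C ∧
    ∀ᵐ x ∂μ, ∀ k : ℕ, 0 < k → ∀ m : ℝ, IsMedian T ω k x m →
      ergAvg T ω k x ≤ C * m

theorem stmt17 {X : Type*} [MeasurableSpace X] (μ : Measure X)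
    [IsProbabilityMeasure μ] [NullSingletonClass μ] (hcomp : μ.IsComplete)
    (T : X → X) (hTbij : Function.Bijective T) (hTerg : Ergodic T μ)
    (ω : X → ℝ) (hω : Measurable ω) (hωpos : ∀ x, 0 < ω x)
    (h : MemAexp μ T ω) :
    MemAmed μ T ω := by
  classical
  obtain ⟨C, hCpos, hae⟩ := h
  set L : ℝ := max (Real.log C) 0 with hLdef
  have hL0 : 0 ≤ L := le_max_right _ _
  set D : ℝ := 1 + 3 * (L + 1) with hDdef
  have hDpos : 0 < D := by linarith
  refine ⟨Real.exp D, Real.one_lt_exp_iff.mpr hDpos, ?_⟩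
  filter_upwards [hae] with x hx k hk m hm
  set A := ergAvg T ω k x with hA
  have hkR : (0:ℝ) < k := Nat.cast_pos.mpr hk
  have hsum_pos : 0 < ∑ i ∈ Finset.range k, ω (T^[i] x) :=
    Finset.sum_pos (fun i _ => hωpos _) (by simpa using hk.ne')
  have hApos : 0 < A := by
    rw [hA, ergAvg]; positivity
  have hsum_eq : ∑ i ∈ Finset.range k, ω (T^[i] x) = k * A := by
    rw [hA, ergAvg]; field_simp
  -- log A + S ≤ L
  have hlog : Real.log A + (k:ℝ)⁻¹ * ∑ i ∈ Finset.range k, Real.log (ω (T^[i] x))⁻¹ ≤ L := by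
    have h1 : A * Real.exp ((k:ℝ)⁻¹ * ∑ i ∈ Finset.range k, Real.log (ω (T^[i] x))⁻¹) ≤ C :=
      hx k hk
    have h2 := Real.log_le_log (by positivity) h1
    rw [Real.log_mul hApos.ne' (Real.exp_ne_zero _), Real.log_exp] at h2
    exact h2.trans (le_max_left _ _)
  have hsumlog : ∑ i ∈ Finset.range k, (Real.log A - Real.log (ω (T^[i] x))) ≤ k * L := by
    have heq : ∑ i ∈ Finset.range k, (Real.log A - Real.log (ω (T^[i] x)))
        = (k:ℝ) * (Real.log A + (k:ℝ)⁻¹ * ∑ i ∈ Finset.range k, Real.log (ω (T^[i] x))⁻¹) := by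
      rw [Finset.sum_sub_distrib, Finset.sum_const, Finset.card_range]
      simp only [Real.log_inv, Finset.sum_neg_distrib]
      field_simp
      ring
    rw [heq]
    exact mul_le_mul_of_nonneg_left hlog hkR.le
  set Sm := (Finset.range k).filter (fun i => ω (T^[i] x) ≤ Real.exp (-D) * A) with hSmdef
  -- lower bound on the log sum
  have hlow : (Sm.card : ℝ) * (D - 1)
      ≤ ∑ i ∈ Finset.range k, (Real.log A - Real.log (ω (T^[i] x))) := by
    rw [← Finset.sum_filter_add_sum_filter_not (Finset.range k)
      (fun i => ω (T^[i] x) ≤ Real.exp (-D) * A)]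
    have h1 : (Sm.card : ℝ) * D ≤ ∑ i ∈ Sm, (Real.log A - Real.log (ω (T^[i] x))) := by
      have := Finset.card_nsmul_le_sum Sm (fun i => Real.log A - Real.log (ω (T^[i] x))) D
        (fun i hi => by
          show D ≤ Real.log A - Real.log (ω (T^[i] x))
          have hi' : ω (T^[i] x) ≤ Real.exp (-D) * A := (Finset.mem_filter.mp hi).2
          have := Real.log_le_log (hωpos _) hi'
          rw [Real.log_mul (Real.exp_ne_zero _) hApos.ne', Real.log_exp] at this
          linarith)
      simpa [nsmul_eq_mul] using this
    set R := (Finset.range k).filter (fun i => ¬ ω (T^[i] x) ≤ Real.exp (-D) * A) with hRdef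
    have hcards : (Sm.card : ℝ) + R.card = k := by
      have := Finset.card_filter_add_card_filter_not
        (s := Finset.range k) (p := fun i => ω (T^[i] x) ≤ Real.exp (-D) * A)
      rw [← hSmdef, ← hRdef] at this
      exact_mod_cast by rw [this, Finset.card_range]
    have h2 : (R.card : ℝ) - k ≤ ∑ i ∈ R, (Real.log A - Real.log (ω (T^[i] x))) := by
      have hterm : ∀ i ∈ R, 1 - ω (T^[i] x) / A ≤ Real.log A - Real.log (ω (T^[i] x)) := by
        intro i _
        have h3 := Real.log_le_sub_one_of_pos (div_pos (hωpos (T^[i] x)) hApos)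
        rw [Real.log_div (hωpos _).ne' hApos.ne'] at h3
        linarith
      have h4 : ∑ i ∈ R, (1 - ω (T^[i] x) / A)
          ≤ ∑ i ∈ R, (Real.log A - Real.log (ω (T^[i] x))) :=
        Finset.sum_le_sum hterm
      have h5 : ∑ i ∈ R, (1 - ω (T^[i] x) / A) = (R.card : ℝ) - (∑ i ∈ R, ω (T^[i] x)) / A := by
        rw [Finset.sum_sub_distrib, Finset.sum_const, Finset.sum_div]
        simp [nsmul_eq_mul]
      have h6 : ∑ i ∈ R, ω (T^[i] x) ≤ (k : ℝ) * A := by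
        rw [← hsum_eq]
        exact Finset.sum_le_sum_of_subset_of_nonneg (Finset.filter_subset _ _)
          (fun i _ _ => (hωpos _).le)
      have h7 : (∑ i ∈ R, ω (T^[i] x)) / A ≤ (k : ℝ) := by
        rw [div_le_iff₀ hApos]; exact h6
      linarith
    linarith
  -- conclude: Sm.card < k/2
  have hscard : (Sm.card : ℝ) < k / 2 := by
    have hkey : (Sm.card : ℝ) * (D - 1) ≤ (k : ℝ) * L := le_trans hlow hsumlog
    have hLlt : L < L + 1 := by linarith
    nlinarith [hkR, hL0, Finset.card_range k]
  -- median argument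
  by_contra hcon
  push_neg at hcon
  have hm2 : m < Real.exp (-D) * A := by
    have h8 : Real.exp (-D) * (Real.exp D * m) < Real.exp (-D) * A :=
      mul_lt_mul_of_pos_left hcon (Real.exp_pos _)
    rwa [← mul_assoc, ← Real.exp_add, neg_add_cancel, Real.exp_zero, one_mul] at h8
  have hsubset : (Finset.range k).filter (fun i => ¬ m < ω (T^[i] x)) ⊆ Sm := by
    intro i hi
    rw [Finset.mem_filter, not_lt] at hi
    exact Finset.mem_filter.mpr ⟨hi.1, hi.2.trans hm2.le⟩
  have hcard2 := Finset.card_le_card hsubset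
  have hcard3 := Finset.card_filter_add_card_filter_not
    (s := Finset.range k) (p := fun i => m < ω (T^[i] x))
  rw [Finset.card_range] at hcard3
  have hmed := hm.2
  have hc2 : ((((Finset.range k).filter (fun i => ¬ m < ω (T^[i] x))).card : ℝ)) ≤ Sm.card :=
    Nat.cast_le.mpr hcard2
  have hc3 : (((Finset.range k).filter (fun i => m < ω (T^[i] x))).card : ℝ)
      + (((Finset.range k).filter (fun i => ¬ m < ω (T^[i] x))).card : ℝ) = k := by
    exact_mod_cast hcard3
  linarith
end

section
/- Let ω be a weight. If ω ∈ A^med_∞, then ω ∈ A^M_∞. -/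
open MeasureTheory Finset

lemma exists_median_aux (f : ℕ → ℝ) (k : ℕ) (hk : 0 < k) :
    ∃ m, 2 * ((Finset.range k).filter fun i => f i < m).card ≤ k ∧
         2 * ((Finset.range k).filter fun i => m < f i).card ≤ k := by
  classical
  set s := Finset.range k with hs'
  have hs : s.Nonempty := by simp [hs', Finset.nonempty_range_iff, hk.ne']
  set V := s.image f with hV
  have hVne : V.Nonempty := hs.image f
  set g : ℝ → ℕ := fun v => (s.filter fun i => f i ≤ v).card with hg
  set W := V.filter (fun v => k ≤ 2 * g v) with hW
  have hWne : W.Nonempty := by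
    refine ⟨V.max' hVne, Finset.mem_filter.mpr ⟨V.max'_mem hVne, ?_⟩⟩
    have hfull : s.filter (fun i => f i ≤ V.max' hVne) = s := by
      apply Finset.filter_true_of_mem
      intro i hi
      exact V.le_max' _ (Finset.mem_image_of_mem f hi)
    have : g (V.max' hVne) = k := by
      show (s.filter fun i => f i ≤ V.max' hVne).card = k
      rw [hfull, hs', Finset.card_range]
    omega
  set m := W.min' hWne with hm
  have hmW : m ∈ W := W.min'_mem hWne
  have hmk : k ≤ 2 * g m := (Finset.mem_filter.mp hmW).2
  refine ⟨m, ?_, ?_⟩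
  · by_cases hP : (s.filter fun i => f i < m).Nonempty
    · set P := s.filter fun i => f i < m with hPdef
      have hPim : (P.image f).Nonempty := hP.image f
      set v := (P.image f).max' hPim with hv
      have hvP : v ∈ P.image f := Finset.max'_mem _ _
      obtain ⟨i0, hi0P, hi0v⟩ := Finset.mem_image.mp hvP
      have hvm : v < m := by rw [← hi0v]; exact (Finset.mem_filter.mp hi0P).2
      have hvV : v ∈ V := by
        rw [← hi0v]; exact Finset.mem_image_of_mem f (Finset.mem_filter.mp hi0P).1
      have hvnW : ¬ (k ≤ 2 * g v) := by
        intro hcon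
        have : m ≤ v := Finset.min'_le W v (Finset.mem_filter.mpr ⟨hvV, hcon⟩)
        linarith
      have hPg : P.card ≤ g v := by
        apply Finset.card_le_card
        intro i hi
        have hiP := hi
        rw [hPdef, Finset.mem_filter] at hi
        refine Finset.mem_filter.mpr ⟨hi.1, ?_⟩
        exact Finset.le_max' _ _ (Finset.mem_image_of_mem f hiP)
      omega
    · rw [Finset.not_nonempty_iff_eq_empty.mp hP]
      simp
  · have hsplit := Finset.card_filter_add_card_filter_not
      (s := s) (p := fun i => m < f i)
    have hneg : (s.filter fun i => ¬ m < f i) = s.filter fun i => f i ≤ m := by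
      simp [not_lt]
    rw [hneg] at hsplit
    have hcard : s.card = k := Finset.card_range k
    have : (s.filter fun i => f i ≤ m).card = g m := rfl
    omega

theorem stmt18 {X : Type*} [MeasurableSpace X] (μ : Measure X)
    [IsProbabilityMeasure μ] [NullSingletonClass μ] (hcomp : μ.IsComplete)
    (T : X → X) (hTbij : Function.Bijective T) (hTerg : Ergodic T μ)
    (ω : X → ℝ) (hω : Measurable ω) (hωpos : ∀ x, 0 < ω x)
    (h : MemAmed μ T ω) :
    MemAM μ T ω := by
  obtain ⟨C, hC, hae⟩ := h
  have hC0 : (0:ℝ) < C := by linarith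
  have h4C : (0:ℝ) < 4 * C := by linarith
  refine ⟨1/4, 1 - 1/(4*C), by norm_num, by norm_num, ?_, ?_, ?_⟩
  · have h1 : 1/(4*C) < 1 := by
      rw [div_lt_one h4C]; linarith
    linarith
  · have h2 : (0:ℝ) < 1/(4*C) := by positivity
    linarith
  · filter_upwards [hae] with x hx
    intro k hk A hA hAcard
    set f : ℕ → ℝ := fun i => ω (T^[i] x) with hf
    have hfpos : ∀ i, 0 < f i := fun i => hωpos _
    obtain ⟨m, hm1, hm2⟩ := exists_median_aux f k hk
    have hk' : (0:ℝ) < k := by exact_mod_cast hk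
    have hm1' : ((((Finset.range k).filter fun i => f i < m).card : ℝ)) ≤ k / 2 := by
      have := hm1
      have : ((2 * ((Finset.range k).filter fun i => f i < m).card : ℕ) : ℝ) ≤ (k : ℝ) := by
        exact_mod_cast hm1
      push_cast at this
      linarith
    have hm2' : ((((Finset.range k).filter fun i => m < f i).card : ℝ)) ≤ k / 2 := by
      have : ((2 * ((Finset.range k).filter fun i => m < f i).card : ℕ) : ℝ) ≤ (k : ℝ) := by
        exact_mod_cast hm2
      push_cast at this
      linarith
    have hmed : IsMedian T ω k x m := ⟨hm1', hm2'⟩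
    have hCm := hx k hk m hmed
    set S := ∑ i ∈ Finset.range k, f i with hS
    have hSpos : 0 < S :=
      Finset.sum_pos (fun i _ => hfpos i) (Finset.nonempty_range_iff.mpr hk.ne')
    have hmS : S ≤ C * m * k := by
      have havg : ergAvg T ω k x = (k : ℝ)⁻¹ * S := rfl
      rw [havg] at hCm
      have h1 := mul_le_mul_of_nonneg_left hCm hk'.le
      rw [← mul_assoc, mul_inv_cancel₀ hk'.ne', one_mul] at h1
      have h2 : (k:ℝ) * (C * m) = C * m * k := by ring
      linarith
    have hmpos : 0 < m := by nlinarith [mul_pos hC0 hk']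
    set B := Finset.range k \ A with hB
    have hAk : (A.card : ℝ) ≤ k := le_trans hAcard (by linarith)
    have hBcard : (B.card : ℝ) = k - A.card := by
      rw [hB, Finset.card_sdiff_of_subset hA, Finset.card_range]
      have hle : A.card ≤ k := Finset.card_le_card hA |>.trans (by simp)
      push_cast [Nat.cast_sub hle]
      ring
    set Bg := B.filter fun i => m ≤ f i with hBg
    have hsplitB := Finset.card_filter_add_card_filter_not
      (s := B) (p := fun i => m ≤ f i)
    have hnegB : (B.filter fun i => ¬ m ≤ f i) = B.filter fun i => f i < m := by
      simp [not_le]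
    rw [hnegB] at hsplitB
    have hsubc : (B.filter fun i => f i < m).card ≤
        ((Finset.range k).filter fun i => f i < m).card := by
      apply Finset.card_le_card
      exact Finset.filter_subset_filter _ (Finset.sdiff_subset)
    have hBgcard : (k:ℝ)/4 ≤ Bg.card := by
      have h1 : (Bg.card : ℝ) + ((B.filter fun i => f i < m).card : ℝ) = (B.card : ℝ) := by
        exact_mod_cast hsplitB
      have h2 : ((B.filter fun i => f i < m).card : ℝ) ≤ k / 2 := by
        refine le_trans ?_ hm1'
        exact_mod_cast hsubc
      rw [hBcard] at h1
      linarith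
    have hsumBg : (k:ℝ)/4 * m ≤ ∑ i ∈ Bg, f i := by
      have h1 : (Bg.card : ℝ) * m ≤ ∑ i ∈ Bg, f i := by
        have := Finset.card_nsmul_le_sum Bg f m (fun i hi => (Finset.mem_filter.mp hi).2)
        simpa [nsmul_eq_mul] using this
      calc (k:ℝ)/4 * m ≤ (Bg.card : ℝ) * m := mul_le_mul_of_nonneg_right hBgcard hmpos.le
        _ ≤ _ := h1
    have hsumB : ∑ i ∈ Bg, f i ≤ ∑ i ∈ B, f i :=
      Finset.sum_le_sum_of_subset_of_nonneg (Finset.filter_subset _ _)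
        (fun i _ _ => (hfpos i).le)
    have hAB : ∑ i ∈ B, f i + ∑ i ∈ A, f i = S := by
      rw [hS, hB]
      exact Finset.sum_sdiff hA
    have hkey : S / (4*C) ≤ (k:ℝ)/4 * m := by
      rw [div_le_iff₀ h4C]
      nlinarith
    have : ∑ i ∈ A, f i ≤ (1 - 1/(4*C)) * S := by
      have hfrac : (1 - 1/(4*C)) * S = S - S/(4*C) := by
        field_simp
      rw [hfrac]
      linarith
    exact this
end
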